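/- arXiv:2011.04699 — 4 statements merged into one kernel-verified Lean document; each statement's English description precedes it below -/
import Mathlib

section
/- For all a, b ∈ 𝔹_n and all x ∈ 𝔹_n, e^{−d(a,b)} ≤ [x,a]/[x,b] ≤ e^{d(a,b)}, where d is the hyperbolic metric on 𝔹_n. -/
noncomputable section

open MeasureTheory Real Set Filter Topology Pointwise
open scoped RealInnerProductSpace ENNReal

namespace HLTV

abbrev E (n : ℕ) : Type := EuclideanSpace ℝ (Fin n)

/-- The open unit ball of `ℝ^n`. -/
def Ball (n : ℕ) : Set (E n) := Metric.ball 0 1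

/-- Lebesgue measure on the unit ball, normalized so that the ball has measure one. -/
def V (n : ℕ) : Measure (E n) :=
  (volume (Metric.ball (0 : E n) 1))⁻¹ • (volume.restrict (Metric.ball (0 : E n) 1))

/-- The standard weight `w(x) = 1 - |x|²`. -/
def w {n : ℕ} (x : E n) : ℝ := 1 - ‖x‖ ^ 2

/-- The normalizing constant `c(n,λ)`. -/
def cnl (n : ℕ) (l : ℝ) : ℝ :=
  2 / (n : ℝ) * Real.Gamma ((n : ℝ) / 2 + l + 1) /
    (Real.Gamma ((n : ℝ) / 2) * Real.Gamma (l + 1))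

/-- The weighted measure `dV_λ = c(n,λ) w^λ dV`. -/
def Vl (n : ℕ) (l : ℝ) : Measure (E n) :=
  (V n).withDensity fun x => ENNReal.ofReal (cnl n l * w x ^ l)

/-- A (complex-valued) function is harmonic on `s` if it is `C²` there and its Laplacian
vanishes. -/
def HarmonicOn {n : ℕ} (f : E n → ℂ) (s : Set (E n)) : Prop :=
  ContDiffOn ℝ 2 f s ∧
    ∀ x ∈ s,
      (∑ i : Fin n,
        fderiv ℝ (fun y => fderiv ℝ f y (EuclideanSpace.single i (1 : ℝ))) x
          (EuclideanSpace.single i (1 : ℝ))) = 0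

/-- Membership in the weighted harmonic Bergman space `b^p_λ`. -/
def MemBergman (n : ℕ) (l p : ℝ) (f : E n → ℂ) : Prop :=
  HarmonicOn f (Ball n) ∧ MemLp f (ENNReal.ofReal p) (Vl n l)

/-- The norm `‖·‖_{p,λ}` (as an extended nonnegative real). -/
def lpNorm (n : ℕ) (l p : ℝ) (f : E n → ℂ) : ℝ≥0∞ :=
  eLpNorm f (ENNReal.ofReal p) (Vl n l)

/-- The integral operator with kernel `R`. -/
def Pker (n : ℕ) (l : ℝ) (R : E n → E n → ℝ) (f : E n → ℂ) : E n → ℂ :=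
  fun x => ∫ y, f y * (R x y : ℂ) ∂(Vl n l)

/-- `R` is the reproducing (Bergman projection) kernel for `b²_λ`:  the associated integral
operator is bounded on compacts, and it is the orthogonal projection of `L²_λ` onto the
harmonic Bergman space `b²_λ`. -/
def IsBergmanKernel (n : ℕ) (l : ℝ) (R : E n → E n → ℝ) : Prop :=
  Measurable (Function.uncurry R) ∧
  (∀ K : Set (E n), K ⊆ Ball n → IsCompact K →
    ∃ M : ℝ, ∀ x ∈ K, ∀ y ∈ Ball n, |R x y| ≤ M) ∧
  ∀ f : E n → ℂ, MemLp f 2 (Vl n l) →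
    MemBergman n l 2 (Pker n l R f) ∧
    ∀ g : E n → ℂ, MemBergman n l 2 g →
      ∫ x, (f x - Pker n l R f x) * (starRingEnd ℂ) (g x) ∂(Vl n l) = 0

/-! ### Möbius transformations -/

/-- The bracket `[x,y] = (1 - 2 x·y + |x|²|y|²)^{1/2}`. -/
def br {n : ℕ} (x y : E n) : ℝ := Real.sqrt (1 - 2 * (inner ℝ x y : ℝ) + ‖x‖ ^ 2 * ‖y‖ ^ 2)

/-- The Möbius transformation `φ_a`. -/
def mob {n : ℕ} (a x : E n) : E n :=
  ((br x a) ^ 2)⁻¹ • (‖x - a‖ ^ 2 • a - (1 - ‖a‖ ^ 2) • (x - a))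

/-- The hyperbolic (Poincaré) distance on the ball. -/
def hypd {n : ℕ} (a b : E n) : ℝ := Real.log ((1 + ‖mob a b‖) / (1 - ‖mob a b‖))

/-! ### Spherical coordinates and the spherical-box decomposition -/

def i0 (n : ℕ) (hn : 2 ≤ n) : Fin n := ⟨0, by omega⟩
def i1 (n : ℕ) (hn : 2 ≤ n) : Fin n := ⟨1, by omega⟩
def ilast (n : ℕ) (hn : 2 ≤ n) : Fin n := ⟨n - 1, by omega⟩

/-- The spherical coordinate map `σ : ℚ_n → 𝔹_n`. -/
def sph (n : ℕ) (hn : 2 ≤ n) (γ : Fin n → ℝ) : E n := WithLp.toLp 2 fun i =>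
  γ (i0 n hn) *
    (∏ j ∈ Finset.univ.filter (fun j : Fin n => 1 ≤ j.val ∧ j.val ≤ i.val),
      Real.sin (γ j)) *
    (if h : i.val + 1 < n then Real.cos (γ ⟨i.val + 1, h⟩) else 1)

/-- The parameter box `ℚ_n = [0,1) × [0,π]^{n-2} × [0,2π]`. -/
def QQn (n : ℕ) (hn : 2 ≤ n) : Set (Fin n → ℝ) :=
  {γ | γ (i0 n hn) ∈ Ico (0 : ℝ) 1 ∧
    (∀ i : Fin n, 1 ≤ i.val → i.val ≤ n - 2 → γ i ∈ Icc 0 π) ∧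
    γ (ilast n hn) ∈ Icc 0 (2 * π)}

/-- The Jacobian determinant of the spherical coordinate map. -/
def Jsig (n : ℕ) (hn : 2 ≤ n) (γ : Fin n → ℝ) : ℝ :=
  γ (i0 n hn) ^ (n - 1) *
    ∏ j ∈ Finset.univ.filter (fun j : Fin n => 1 ≤ j.val ∧ j.val ≤ n - 2),
      Real.sin (γ j) ^ (n - 1 - j.val)

/-- For `x, y ∈ ℚ_n`, the box `Q(x,y) ⊆ ℚ_n` spanned by `x` and `y`. -/
def Qxy (n : ℕ) (hn : 2 ≤ n) (x y : Fin n → ℝ) : Set (Fin n → ℝ) :=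
  QQn n hn ∩ {z | ∀ i, z i ∈ Icc (min (x i) (y i)) (max (x i) (y i))}

/-- The spherical box `B(x,y) = σ(Q(x,y))`. -/
def Bxy (n : ℕ) (hn : 2 ≤ n) (x y : Fin n → ℝ) : Set (E n) :=
  sph n hn '' Qxy n hn x y

/-- The index data of the dyadic spherical boxes:  an index vector
`k = (m, k₂, …, k_n)` with `0 ≤ k_n ≤ … ≤ k₂ ≤ 2^m - 1` together with a pattern of
reflections `θ_j ↦ π - θ_j` applied in the coordinates `j = 2, …, n-1`. -/
structure BoxIndex (n : ℕ) (hn : 2 ≤ n) where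
  k : Fin n → ℕ
  refl : Fin n → Bool
  antitone : ∀ i j : Fin n, 1 ≤ i.val → i ≤ j → k j ≤ k i
  le_top : k (i1 n hn) ≤ 2 ^ (k (i0 n hn)) - 1
  refl_first : refl (i0 n hn) = false
  refl_last : refl (ilast n hn) = false

/-- The generation `m` of a dyadic box. -/
def gen {n : ℕ} {hn : 2 ≤ n} (b : BoxIndex n hn) : ℕ := b.k (i0 n hn)

def den (n : ℕ) (hn : 2 ≤ n) (k : Fin n → ℕ) (i : Fin n) : ℝ :=
  if i.val = 1 then (2 : ℝ) ^ (k (i0 n hn))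
  else (k ⟨i.val - 1, by have := i.isLt; omega⟩ : ℝ) + 1

def coeff (n : ℕ) (i : Fin n) : ℝ := if i.val = n - 1 then 2 * π else π / 2

/-- Left endpoints of the defining intervals of the (unreflected) box `C_k`. -/
def lo (n : ℕ) (hn : 2 ≤ n) (k : Fin n → ℕ) (i : Fin n) : ℝ :=
  if i.val = 0 then 1 - ((2 : ℝ) ^ (k i))⁻¹
  else coeff n i * (k i : ℝ) / den n hn k i

/-- Right endpoints of the defining intervals of the (unreflected) box `C_k`. -/
def hi (n : ℕ) (hn : 2 ≤ n) (k : Fin n → ℕ) (i : Fin n) : ℝ :=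
  if i.val = 0 then 1 - ((2 : ℝ) ^ (k i + 1))⁻¹
  else coeff n i * ((k i : ℝ) + 1) / den n hn k i

/-- The defining interval of the box `Q_j` in coordinate `i` (taking the reflections
into account). -/
def ivl {n : ℕ} {hn : 2 ≤ n} (b : BoxIndex n hn) (i : Fin n) : Set ℝ :=
  if b.refl i then Icc (π - hi n hn b.k i) (π - lo n hn b.k i)
  else Icc (lo n hn b.k i) (hi n hn b.k i)

/-- The box `Q_j ⊆ ℚ_n`. -/
def Qbox {n : ℕ} {hn : 2 ≤ n} (b : BoxIndex n hn) : Set (Fin n → ℝ) :=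
  {γ | ∀ i, γ i ∈ ivl b i}

/-- The dyadic spherical box `B_j = σ(Q_j) ⊆ 𝔹_n`. -/
def Bbox {n : ℕ} {hn : 2 ≤ n} (b : BoxIndex n hn) : Set (E n) :=
  sph n hn '' Qbox b

/-- The enlarged box `B_j^* = B_j + 2^{-m-2}𝔹_n`. -/
def Bstar {n : ℕ} {hn : 2 ≤ n} (b : BoxIndex n hn) : Set (E n) :=
  Bbox b + Metric.ball (0 : E n) (((2 : ℝ) ^ (gen b + 2))⁻¹)

/-- The smallest corner `x^{(j)}` of `Q_j` with respect to the order (2.2). -/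
def xcorner {n : ℕ} {hn : 2 ≤ n} (b : BoxIndex n hn) : Fin n → ℝ :=
  fun i => if b.refl i then π - lo n hn b.k i else lo n hn b.k i

/-- The largest corner `y^{(j)}` of `Q_j` with respect to the order (2.2). -/
def ycorner {n : ℕ} {hn : 2 ≤ n} (b : BoxIndex n hn) : Fin n → ℝ :=
  fun i => if b.refl i then π - hi n hn b.k i else hi n hn b.k i

/-- `|∫_{B(x^{(j)},y)} ψ dV_λ|` for `y = σ(γ)`, `γ ∈ Q_j`. -/
def boxIntegral (n : ℕ) (hn : 2 ≤ n) (l : ℝ) (ψ : E n → ℂ) (b : BoxIndex n hn)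
    (γ : Fin n → ℝ) : ℝ :=
  ‖∫ x in Bxy n hn (xcorner b) γ, ψ x ∂(Vl n l)‖

/-- `ψ̂_j = sup_{y ∈ B_j} |∫_{B(x^{(j)},y)} ψ dV_λ|`. -/
def psiHat (n : ℕ) (hn : 2 ≤ n) (l : ℝ) (ψ : E n → ℂ) (b : BoxIndex n hn) : ℝ :=
  sSup (boxIntegral n hn l ψ b '' Qbox b)

/-- The weighted volume `|B_j|_λ`. -/
def wVol (n : ℕ) (hn : 2 ≤ n) (l : ℝ) (b : BoxIndex n hn) : ℝ :=
  ((Vl n l) (Bbox b)).toReal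

/-- The weak Carleson condition `ψ̂_j ≤ C_ψ |B_j|_λ` for all `j`. -/
def WeakCarleson (n : ℕ) (hn : 2 ≤ n) (l : ℝ) (ψ : E n → ℂ) (C : ℝ) : Prop :=
  ∀ b : BoxIndex n hn, ∀ γ ∈ Qbox b, boxIntegral n hn l ψ b γ ≤ C * wVol n hn l b

/-- One term `T_ψ(χ_{B_j} f) = P_λ(ψ χ_{B_j} f)` of the series defining the generalized
Toeplitz operator. -/
def Tterm (n : ℕ) (hn : 2 ≤ n) (l : ℝ) (R : E n → E n → ℝ) (ψ f : E n → ℂ)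
    (b : BoxIndex n hn) : E n → ℂ :=
  Pker n l R ((Bbox b).indicator fun y => ψ y * f y)

/-- The generalized Toeplitz operator `T_ψ f = Σ_j P_λ(ψ χ_{B_j} f)`. -/
def Tgen (n : ℕ) (hn : 2 ≤ n) (l : ℝ) (R : E n → E n → ℝ) (ψ f : E n → ℂ) : E n → ℂ :=
  fun x => ∑' b : BoxIndex n hn, Tterm n hn l R ψ f b x

/-- Truncation `ψ_ρ` of a symbol. -/
def cut {n : ℕ} (ρ : ℝ) (ψ : E n → ℂ) : E n → ℂ := fun z => if ‖z‖ ≤ ρ then ψ z else 0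

/-! ### Derivatives -/

/-- Partial derivative in the `i`-th Cartesian coordinate. -/
def pderivE {n : ℕ} {F : Type} [NormedAddCommGroup F] [NormedSpace ℝ F] (i : Fin n)
    (f : E n → F) : E n → F :=
  fun x => fderiv ℝ f x (EuclideanSpace.single i (1 : ℝ))

/-- The iterated Cartesian partial derivative `D^α`. -/
def Dmulti {n : ℕ} {F : Type} [NormedAddCommGroup F] [NormedSpace ℝ F] (α : Fin n → ℕ)
    (f : E n → F) : E n → F :=
  (List.finRange n).foldr (fun i g => (pderivE i)^[α i] g) f

/-- Partial derivative in the `i`-th spherical coordinate. -/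
def pderivPi {n : ℕ} {F : Type} [NormedAddCommGroup F] [NormedSpace ℝ F] (i : Fin n)
    (G : (Fin n → ℝ) → F) : (Fin n → ℝ) → F :=
  fun γ => fderiv ℝ G γ (Pi.single i (1 : ℝ))

/-- The iterated spherical-coordinate partial derivative `D^α_γ`. -/
def DmultiPi {n : ℕ} {F : Type} [NormedAddCommGroup F] [NormedSpace ℝ F] (α : Fin n → ℕ)
    (G : (Fin n → ℝ) → F) : (Fin n → ℝ) → F :=
  (List.finRange n).foldr (fun i h => (pderivPi i)^[α i] h) G

/-- The multi-index `α ∈ {0,1}^n` associated to a boolean vector. -/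
def natOf {n : ℕ} (α : Fin n → Bool) : Fin n → ℕ := fun i => if α i then 1 else 0

/-- The "surface" measure on the face `Q_α(x,y)`: Lebesgue measure in the coordinates with
`α_k = 1` (restricted to the corresponding interval), Dirac measure at `y_k` in the
coordinates with `α_k = 0`. -/
def bdryMeasure (n : ℕ) (α : Fin n → Bool) (x y : Fin n → ℝ) : Measure (Fin n → ℝ) :=
  Measure.pi fun i =>
    if α i then (volume : Measure ℝ).restrict (Icc (min (x i) (y i)) (max (x i) (y i)))
    else Measure.dirac (y i)

/-- The function `c_β` of Lemma 5.2. -/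
def cbeta {n : ℕ} (α : Fin n → Bool) (β : Fin n → ℕ) (γ : Fin n → ℝ) : ℝ :=
  ∏ j ∈ Finset.univ.filter (fun j : Fin n => 1 ≤ j.val ∧ j.val ≤ n - 2),
    Real.sin (γ j) ^
      ((∑ i, β i) - ∑ i ∈ Finset.univ.filter (fun i : Fin n => i.val ≤ j.val), natOf α i)

/-! ### The analytic (holomorphic) setting on `𝔹_{2n} = 𝐁_n ⊆ ℂ^n` -/

/-- Identification of `ℂ^n` with `ℝ^{2n}`. -/
def toCx (n : ℕ) (z : Fin n → ℂ) : E (2 * n) := WithLp.toLp 2 fun i =>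
  if i.val % 2 = 0 then (z ⟨i.val / 2, by have := i.isLt; omega⟩).re
  else (z ⟨i.val / 2, by have := i.isLt; omega⟩).im

/-- `f : 𝔹_{2n} → ℂ` is holomorphic as a function of `n` complex variables. -/
def HolOn (n : ℕ) (f : E (2 * n) → ℂ) : Prop :=
  DifferentiableOn ℂ (fun z : Fin n → ℂ => f (toCx n z)) {z | toCx n z ∈ Ball (2 * n)}

/-- Membership in the weighted (analytic) Bergman space `A^p_λ(𝐁_n)`. -/
def MemBergmanA (n : ℕ) (l p : ℝ) (f : E (2 * n) → ℂ) : Prop :=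
  HolOn n f ∧ MemLp f (ENNReal.ofReal p) (Vl (2 * n) l)

/-- The integral operator with (complex) kernel `K` on the ball `𝔹_{2n}`. -/
def PkerC (n : ℕ) (l : ℝ) (K : E n → E n → ℂ) (f : E n → ℂ) : E n → ℂ :=
  fun x => ∫ y, f y * K x y ∂(Vl n l)

/-- `K` is the Bergman projection kernel for `A²_λ(𝐁_n)`. -/
def IsBergmanKernelA (n : ℕ) (l : ℝ) (K : E (2 * n) → E (2 * n) → ℂ) : Prop :=
  Measurable (Function.uncurry K) ∧
  (∀ S : Set (E (2 * n)), S ⊆ Ball (2 * n) → IsCompact S →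
    ∃ M : ℝ, ∀ x ∈ S, ∀ y ∈ Ball (2 * n), ‖K x y‖ ≤ M) ∧
  ∀ f : E (2 * n) → ℂ, MemLp f 2 (Vl (2 * n) l) →
    MemBergmanA n l 2 (PkerC (2 * n) l K f) ∧
    ∀ g : E (2 * n) → ℂ, MemBergmanA n l 2 g →
      ∫ x, (f x - PkerC (2 * n) l K f x) * (starRingEnd ℂ) (g x) ∂(Vl (2 * n) l) = 0

/-- One term of the series defining the generalized analytic Toeplitz operator. -/
def TtermA (n : ℕ) (hn : 2 ≤ 2 * n) (l : ℝ) (K : E (2 * n) → E (2 * n) → ℂ)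
    (ψ f : E (2 * n) → ℂ) (b : BoxIndex (2 * n) hn) : E (2 * n) → ℂ :=
  PkerC (2 * n) l K ((Bbox b).indicator fun y => ψ y * f y)

/-- The generalized analytic Toeplitz operator `T^an_ψ f = Σ_j P^an_λ(ψ χ_{B_j} f)`. -/
def TgenA (n : ℕ) (hn : 2 ≤ 2 * n) (l : ℝ) (K : E (2 * n) → E (2 * n) → ℂ)
    (ψ f : E (2 * n) → ℂ) : E (2 * n) → ℂ :=
  fun x => ∑' b : BoxIndex (2 * n) hn, TtermA n hn l K ψ f b x


/-- The normalizing factor relating `dV_λ` to Lebesgue measure in coordinates. -/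
def normConst (n : ℕ) (l : ℝ) : ℝ :=
  cnl n l * ((volume (Metric.ball (0 : E n) 1)).toReal)⁻¹

lemma br_comm {n : ℕ} (x y : E n) : br x y = br y x := by
  rw [br, br, real_inner_comm]; ring_nf

lemma br_arg_nonneg {n : ℕ} (x y : E n) (hx : ‖x‖ ≤ 1) (hy : ‖y‖ ≤ 1) :
    0 ≤ 1 - 2 * (inner ℝ x y : ℝ) + ‖x‖ ^ 2 * ‖y‖ ^ 2 := by
  have hx2 : ‖x‖ ^ 2 ≤ 1 := by nlinarith [norm_nonneg x]
  have hy2 : ‖y‖ ^ 2 ≤ 1 := by nlinarith [norm_nonneg y]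
  nlinarith [sq_nonneg ‖x - y‖, norm_sub_sq_real x y,
    mul_nonneg (sub_nonneg.2 hx2) (sub_nonneg.2 hy2)]

lemma br_sq {n : ℕ} (x y : E n) (hx : ‖x‖ ≤ 1) (hy : ‖y‖ ≤ 1) :
    br x y ^ 2 = ‖x - y‖ ^ 2 + (1 - ‖x‖ ^ 2) * (1 - ‖y‖ ^ 2) := by
  rw [br, Real.sq_sqrt (br_arg_nonneg x y hx hy)]
  nlinarith [norm_sub_sq_real x y]

lemma br_nonneg {n : ℕ} (x y : E n) : 0 ≤ br x y := Real.sqrt_nonneg _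

/-- scaled star identity: `‖ ‖x‖² • y - x ‖ = ‖x‖ * br x y`. -/
lemma star_id {n : ℕ} (x y : E n) (hx : ‖x‖ ≤ 1) (hy : ‖y‖ ≤ 1) :
    ‖(‖x‖ ^ 2 : ℝ) • y - x‖ = ‖x‖ * br x y := by
  have h : ‖(‖x‖ ^ 2 : ℝ) • y - x‖ ^ 2 = (‖x‖ * br x y) ^ 2 := by
    have h1 : ‖(‖x‖ ^ 2 : ℝ) • y - x‖ ^ 2
        = ‖(‖x‖ ^ 2 : ℝ) • y‖ ^ 2 - 2 * (inner ℝ ((‖x‖ ^ 2 : ℝ) • y) x : ℝ) + ‖x‖ ^ 2 :=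
      norm_sub_sq_real _ x
    have h2 : (‖x‖ * br x y) ^ 2
        = ‖x‖ ^ 2 * (1 - 2 * (inner ℝ x y : ℝ) + ‖x‖ ^ 2 * ‖y‖ ^ 2) := by
      rw [mul_pow, br, Real.sq_sqrt (br_arg_nonneg x y hx hy)]
    rw [h1, h2, norm_smul, real_inner_smul_left, real_inner_comm,
      Real.norm_eq_abs, abs_of_nonneg (sq_nonneg ‖x‖)]
    ring
  calc ‖(‖x‖ ^ 2 : ℝ) • y - x‖ = √(‖(‖x‖ ^ 2 : ℝ) • y - x‖ ^ 2) :=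
        (Real.sqrt_sq (norm_nonneg _)).symm
    _ = √((‖x‖ * br x y) ^ 2) := by rw [h]
    _ = ‖x‖ * br x y := Real.sqrt_sq (mul_nonneg (norm_nonneg x) (br_nonneg x y))

/-- `‖mob a b‖ * br a b = ‖a - b‖` -/
lemma mob_norm {n : ℕ} (a b : E n) (ha : ‖a‖ < 1) (hb : ‖b‖ < 1) :
    ‖mob a b‖ * br a b = ‖a - b‖ := by
  have hC : 0 < br a b ^ 2 := by
    rw [br_sq a b ha.le hb.le]
    have h1 : 0 < (1 - ‖a‖ ^ 2) * (1 - ‖b‖ ^ 2) := by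
      apply mul_pos <;> nlinarith [norm_nonneg a, norm_nonneg b]
    nlinarith [sq_nonneg ‖a - b‖]
  set v : E n := ‖b - a‖ ^ 2 • a - (1 - ‖a‖ ^ 2) • (b - a) with hv
  have hvn : ‖v‖ = ‖b - a‖ * br a b := by
    have hsq : ‖v‖ ^ 2 = (‖b - a‖ * br a b) ^ 2 := by
      have h1 : ‖v‖ ^ 2 = ‖(‖b - a‖ ^ 2 : ℝ) • a‖ ^ 2
          - 2 * (inner ℝ ((‖b - a‖ ^ 2 : ℝ) • a) ((1 - ‖a‖ ^ 2 : ℝ) • (b - a)) : ℝ)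
          + ‖(1 - ‖a‖ ^ 2 : ℝ) • (b - a)‖ ^ 2 := norm_sub_sq_real _ _
      have h2 : (‖b - a‖ * br a b) ^ 2
          = ‖b - a‖ ^ 2 * (1 - 2 * (inner ℝ a b : ℝ) + ‖a‖ ^ 2 * ‖b‖ ^ 2) := by
        rw [mul_pow, br, Real.sq_sqrt (br_arg_nonneg a b ha.le hb.le)]
      have h3 : (inner ℝ a (b - a) : ℝ) = (inner ℝ a b : ℝ) - ‖a‖ ^ 2 := by
        simp only [inner_sub_right]
        rw [real_inner_self_eq_norm_sq]
      have h4 : ‖b - a‖ ^ 2 = ‖b‖ ^ 2 - 2 * (inner ℝ a b : ℝ) + ‖a‖ ^ 2 := by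
        rw [norm_sub_sq_real, real_inner_comm]
      rw [h1, h2, norm_smul, norm_smul, real_inner_smul_left, real_inner_smul_right, h3]
      simp only [Real.norm_eq_abs, abs_of_nonneg (sq_nonneg ‖b - a‖)]
      rw [mul_pow, mul_pow, sq_abs]
      linear_combination (‖b - a‖ ^ 2 * ‖a‖ ^ 2) * h4
    calc ‖v‖ = √(‖v‖ ^ 2) := (Real.sqrt_sq (norm_nonneg _)).symm
      _ = √((‖b - a‖ * br a b) ^ 2) := by rw [hsq]
      _ = _ := Real.sqrt_sq (mul_nonneg (norm_nonneg _) (br_nonneg a b))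
  have : mob a b = ((br a b ^ 2)⁻¹ : ℝ) • v := by
    rw [mob, br_comm b a]
  rw [this, norm_smul, Real.norm_eq_abs, abs_of_nonneg (inv_nonneg.2 hC.le), hvn,
    norm_sub_rev b a]
  field_simp
  exact mul_div_cancel_left₀ ‖a - b‖ (show br a b ≠ 0 from fun h0 => by rw [h0] at hC; norm_num at hC)

lemma br_pos {n : ℕ} (x y : E n) (hx : ‖x‖ < 1) (hy : ‖y‖ < 1) : 0 < br x y := by
  have h := br_sq x y hx.le hy.le
  have hp : 0 < (1 - ‖x‖ ^ 2) * (1 - ‖y‖ ^ 2) := by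
    apply mul_pos <;> nlinarith [norm_nonneg x, norm_nonneg y]
  nlinarith [br_nonneg x y, sq_nonneg ‖x - y‖]

lemma key {n : ℕ} (a b x : E n) (ha : ‖a‖ < 1) (hb : ‖b‖ < 1) (hx : ‖x‖ < 1) :
    br x a * (br a b - ‖a - b‖) ≤ br x b * (br a b + ‖a - b‖) := by
  have hA0 : 0 ≤ br x a := br_nonneg x a
  have hB0 : 0 ≤ br x b := br_nonneg x b
  have hC0 : 0 ≤ br a b := br_nonneg a b
  have hD0 : (0:ℝ) ≤ ‖a - b‖ := norm_nonneg _
  -- ‖x - b‖ ≤ br x b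
  have hxb : ‖x - b‖ ≤ br x b := by
    rw [← Real.sqrt_sq (norm_nonneg (x - b)), ← Real.sqrt_sq hB0]
    apply Real.sqrt_le_sqrt
    have h := br_sq x b hx.le hb.le
    have hp : 0 ≤ (1 - ‖x‖ ^ 2) * (1 - ‖b‖ ^ 2) := by
      apply mul_nonneg <;> nlinarith [norm_nonneg x, norm_nonneg b]
    nlinarith
  -- br a b ≤ br x a + br x b
  have hCAB : br a b ≤ br x a + br x b := by
    rcases eq_or_ne a 0 with h0 | h0
    · subst h0
      have e1 : br 0 b = 1 := by simp [br]
      have e2 : br x 0 = 1 := by simp [br]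
      rw [e1, e2]; linarith
    · have hapos : 0 < ‖a‖ := norm_pos_iff.2 h0
      have e1 : ‖(‖a‖ ^ 2 : ℝ) • b - a‖ = ‖a‖ * br a b := star_id a b ha.le hb.le
      have e4 : ‖(‖a‖ ^ 2 : ℝ) • x - a‖ = ‖a‖ * br x a := by
        rw [star_id a x ha.le hx.le, br_comm a x]
      have e2 : ‖(‖a‖ ^ 2 : ℝ) • b - a‖
          ≤ ‖(‖a‖ ^ 2 : ℝ) • b - (‖a‖ ^ 2 : ℝ) • x‖ + ‖(‖a‖ ^ 2 : ℝ) • x - a‖ :=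
        norm_sub_le_norm_sub_add_norm_sub _ _ _
      have e3 : ‖(‖a‖ ^ 2 : ℝ) • b - (‖a‖ ^ 2 : ℝ) • x‖ = ‖a‖ ^ 2 * ‖b - x‖ := by
        rw [← smul_sub, norm_smul, Real.norm_eq_abs, abs_of_nonneg (sq_nonneg ‖a‖)]
      have hbx : ‖b - x‖ ≤ br x b := by rw [norm_sub_rev]; exact hxb
      have ha1 : ‖a‖ ≤ 1 := ha.le
      have : ‖a‖ * br a b ≤ ‖a‖ * br x a + ‖a‖ ^ 2 * ‖b - x‖ := by
        rw [← e1, ← e4]; linarith [e2, e3.le, e3.ge]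
      have s1 : ‖a‖ ^ 2 ≤ ‖a‖ := by nlinarith
      have h5 : ‖a‖ ^ 2 * ‖b - x‖ ≤ ‖a‖ * br x b :=
        le_trans (mul_le_mul_of_nonneg_right s1 (norm_nonneg _))
          (mul_le_mul_of_nonneg_left hbx hapos.le)
      have h6 : ‖a‖ * br a b ≤ ‖a‖ * (br x a + br x b) := by nlinarith
      exact le_of_mul_le_mul_left (by linarith [h6]) hapos
  -- A² - B² ≤ D * (‖x‖A + ‖x‖B)
  have hA2 : br x a ^ 2 = 1 - 2 * (inner ℝ x a : ℝ) + ‖x‖ ^ 2 * ‖a‖ ^ 2 := by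
    rw [br, Real.sq_sqrt (br_arg_nonneg x a hx.le ha.le)]
  have hB2 : br x b ^ 2 = 1 - 2 * (inner ℝ x b : ℝ) + ‖x‖ ^ 2 * ‖b‖ ^ 2 := by
    rw [br, Real.sq_sqrt (br_arg_nonneg x b hx.le hb.le)]
  have hin : (inner ℝ (((‖x‖ ^ 2 : ℝ) • a - x) + ((‖x‖ ^ 2 : ℝ) • b - x)) (a - b) : ℝ)
      = br x a ^ 2 - br x b ^ 2 := by
    simp only [inner_add_left, inner_sub_left, inner_sub_right, real_inner_smul_left]
    rw [real_inner_self_eq_norm_sq, real_inner_self_eq_norm_sq, real_inner_comm b a]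
    linarith [hA2, hB2]
  have hcs : (inner ℝ (((‖x‖ ^ 2 : ℝ) • a - x) + ((‖x‖ ^ 2 : ℝ) • b - x)) (a - b) : ℝ)
      ≤ ‖((‖x‖ ^ 2 : ℝ) • a - x) + ((‖x‖ ^ 2 : ℝ) • b - x)‖ * ‖a - b‖ := real_inner_le_norm _ _
  have htri : ‖((‖x‖ ^ 2 : ℝ) • a - x) + ((‖x‖ ^ 2 : ℝ) • b - x)‖
      ≤ ‖(‖x‖ ^ 2 : ℝ) • a - x‖ + ‖(‖x‖ ^ 2 : ℝ) • b - x‖ := norm_add_le _ _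
  have hun : ‖(‖x‖ ^ 2 : ℝ) • a - x‖ = ‖x‖ * br x a := star_id x a hx.le ha.le
  have hwn : ‖(‖x‖ ^ 2 : ℝ) • b - x‖ = ‖x‖ * br x b := star_id x b hx.le hb.le
  have hAB : br x a ^ 2 - br x b ^ 2 ≤ ‖a - b‖ * (br x a + br x b) := by
    have h1 : ‖(‖x‖ ^ 2 : ℝ) • a - x‖ + ‖(‖x‖ ^ 2 : ℝ) • b - x‖ ≤ br x a + br x b := by
      rw [hun, hwn]
      nlinarith [norm_nonneg x, hx.le]
    nlinarith [norm_nonneg (((‖x‖ ^ 2 : ℝ) • a - x) + ((‖x‖ ^ 2 : ℝ) • b - x))]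
  -- conclude
  rcases le_total (br x a) (br x b) with h | h
  · nlinarith [mul_nonneg hC0 (sub_nonneg.2 h), mul_nonneg hD0 hA0, mul_nonneg hD0 hB0]
  · have hApos : 0 < br x a := br_pos x a hx ha
    have hBpos : 0 < br x b := br_pos x b hx hb
    have hsum : 0 < br x a + br x b := by linarith
    have hd : br x a - br x b ≤ ‖a - b‖ := by
      have h2 : (br x a - br x b) * (br x a + br x b)
          ≤ ‖a - b‖ * (br x a + br x b) := by
        have hring : (br x a - br x b) * (br x a + br x b)
            = br x a ^ 2 - br x b ^ 2 := by ring
        rw [hring]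
        linarith [hAB]
      exact le_of_mul_le_mul_right h2 hsum
    have hmm : br a b * (br x a - br x b) ≤ (br x a + br x b) * ‖a - b‖ :=
      mul_le_mul hCAB hd (by linarith) (by linarith)
    have hg : br x a * (br a b - ‖a - b‖) - br x b * (br a b + ‖a - b‖)
        = br a b * (br x a - br x b) - (br x a + br x b) * ‖a - b‖ := by ring
    linarith [hmm, hg]


/-- **Lemma (bracket controlled by the hyperbolic metric).**
`e^{-d(a,b)} ≤ [x,a]/[x,b] ≤ e^{d(a,b)}`. -/
theorem statement8 (n : ℕ) (hn : 2 ≤ n) (a : E n) (ha : a ∈ Ball n) (b : E n)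
    (hb : b ∈ Ball n) (x : E n) (hx : x ∈ Ball n) :
    Real.exp (-hypd a b) ≤ br x a / br x b ∧ br x a / br x b ≤ Real.exp (hypd a b) := by
  have ha' : ‖a‖ < 1 := by simpa [Ball, mem_ball_zero_iff] using ha
  have hb' : ‖b‖ < 1 := by simpa [Ball, mem_ball_zero_iff] using hb
  have hx' : ‖x‖ < 1 := by simpa [Ball, mem_ball_zero_iff] using hx
  set C := br a b with hC
  set D := ‖a - b‖ with hD
  set t := ‖mob a b‖ with htdef
  have hCpos : 0 < C := br_pos a b ha' hb'
  have hC2 : C ^ 2 = D ^ 2 + (1 - ‖a‖ ^ 2) * (1 - ‖b‖ ^ 2) := br_sq a b ha'.le hb'.le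
  have hp : 0 < (1 - ‖a‖ ^ 2) * (1 - ‖b‖ ^ 2) := by
    apply mul_pos <;> nlinarith [norm_nonneg a, norm_nonneg b]
  have hD0 : (0:ℝ) ≤ D := norm_nonneg _
  have hDC : D < C := by nlinarith
  have ht : t * C = D := mob_norm a b ha' hb'
  have ht0 : (0:ℝ) ≤ t := norm_nonneg _
  have ht1 : t < 1 := by nlinarith
  have hBpos : 0 < br x b := br_pos x b hx' hb'
  have hApos : 0 < br x a := br_pos x a hx' ha'
  have hexp : Real.exp (hypd a b) = (C + D) / (C - D) := by
    rw [hypd, ← htdef, Real.exp_log (div_pos (by linarith) (by linarith))]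
    rw [div_eq_div_iff (by linarith) (by linarith)]
    linear_combination 2 * ht
  have hexp2 : Real.exp (-hypd a b) = (C - D) / (C + D) := by
    rw [Real.exp_neg, hexp, inv_div]
  constructor
  · rw [hexp2, div_le_div_iff₀ (by linarith) hBpos]
    have k2 := key b a x hb' ha' hx'
    rw [br_comm b a, norm_sub_rev b a] at k2
    linarith
  · rw [hexp, div_le_div_iff₀ hBpos (by linarith)]
    linarith [key a b x ha' hb' hx']

end HLTV
end
end

section
/- Let g be n-times continuously differentiable on 𝔹_n and α ∈ {0,1}^n with |α| ≥ 1. Then for every multi-index β ∈ ℕ_0^n with 1 ≤ |β| ≤ |α| there is a bounded smooth function d_β on ℚ_n such that, for all γ = (r,θ_2,…,θ_n) ∈ ℚ_n with x = σ(γ), D^α_γ (g∘σ)(γ) = Σ_{1 ≤ |β| ≤ |α|} c_β(γ) d_β(γ) (D^β_x g)(x), where c_β(γ) = Π_{j=2}^{n−1} (sin θ_j)^{max{0, |β| − (α_1 + ⋯ + α_j)}}; here D^α_γ denotes differentiation in the spherical coordinates of ℚ_n and D^β_x differentiation in the Cartesian coordinates of ℝ^n. -/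
noncomputable section

open MeasureTheory Real Set Filter Topology Pointwise
open scoped RealInnerProductSpace ENNReal

namespace HLTV

/-! ### Auxiliary development for statement16 -/

section Aux

/-- The algebra of "trig polynomials" in the spherical coordinates. -/
def TPgen (n : ℕ) : Set ((Fin n → ℝ) → ℝ) :=
  {f | (∃ j : Fin n, f = fun γ => γ j) ∨ (∃ j : Fin n, f = fun γ => Real.sin (γ j)) ∨
    (∃ j : Fin n, f = fun γ => Real.cos (γ j))}

def TP (n : ℕ) : Subalgebra ℝ ((Fin n → ℝ) → ℝ) := Algebra.adjoin ℝ (TPgen n)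

theorem hasFDerivAt_proj {n : ℕ} (j : Fin n) (γ : Fin n → ℝ) :
    HasFDerivAt (fun γ : Fin n → ℝ => γ j)
      (ContinuousLinearMap.proj j : (Fin n → ℝ) →L[ℝ] ℝ) γ :=
  (ContinuousLinearMap.proj j : (Fin n → ℝ) →L[ℝ] ℝ).hasFDerivAt

theorem pderivPi_proj {n : ℕ} (i j : Fin n) :
    pderivPi i (fun γ : Fin n → ℝ => γ j) = fun _ => if j = i then (1:ℝ) else 0 := by
  funext γ
  have h := (hasFDerivAt_proj j γ).fderiv
  simp only [pderivPi, h]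
  simp [ContinuousLinearMap.proj_apply, Pi.single_apply]

theorem hasFDerivAt_sin_proj {n : ℕ} (j : Fin n) (γ : Fin n → ℝ) :
    HasFDerivAt (fun γ : Fin n → ℝ => Real.sin (γ j))
      (Real.cos (γ j) • (ContinuousLinearMap.proj j : (Fin n → ℝ) →L[ℝ] ℝ)) γ :=
  by have := (Real.hasDerivAt_sin (γ j)).comp_hasFDerivAt γ (hasFDerivAt_proj j γ); exact this

theorem hasFDerivAt_cos_proj {n : ℕ} (j : Fin n) (γ : Fin n → ℝ) :
    HasFDerivAt (fun γ : Fin n → ℝ => Real.cos (γ j))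
      ((-Real.sin (γ j)) • (ContinuousLinearMap.proj j : (Fin n → ℝ) →L[ℝ] ℝ)) γ :=
  by have := (Real.hasDerivAt_cos (γ j)).comp_hasFDerivAt γ (hasFDerivAt_proj j γ); exact this

theorem pderivPi_sin_proj {n : ℕ} (i j : Fin n) :
    pderivPi i (fun γ : Fin n → ℝ => Real.sin (γ j)) =
      fun γ => Real.cos (γ j) * (if j = i then (1:ℝ) else 0) := by
  funext γ
  have h := (hasFDerivAt_sin_proj j γ).fderiv
  simp only [pderivPi, h]
  simp [ContinuousLinearMap.proj_apply, Pi.single_apply]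

theorem pderivPi_cos_proj {n : ℕ} (i j : Fin n) :
    pderivPi i (fun γ : Fin n → ℝ => Real.cos (γ j)) =
      fun γ => -Real.sin (γ j) * (if j = i then (1:ℝ) else 0) := by
  funext γ
  have h := (hasFDerivAt_cos_proj j γ).fderiv
  simp only [pderivPi, h]
  simp [ContinuousLinearMap.proj_apply, Pi.single_apply]

theorem TP_good {n : ℕ} {a : (Fin n → ℝ) → ℝ} (ha : a ∈ TP n) :
    ContDiff ℝ ⊤ a ∧ ∀ i : Fin n, pderivPi i a ∈ TP n := by
  induction ha using Algebra.adjoin_induction with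
  | mem f hf =>
    rcases hf with ⟨j, rfl⟩ | ⟨j, rfl⟩ | ⟨j, rfl⟩
    · refine ⟨(ContinuousLinearMap.proj j : (Fin n → ℝ) →L[ℝ] ℝ).contDiff, fun i => ?_⟩
      rw [pderivPi_proj]
      exact Subalgebra.algebraMap_mem (TP n) _
    · refine ⟨Real.contDiff_sin.comp
        (ContinuousLinearMap.proj j : (Fin n → ℝ) →L[ℝ] ℝ).contDiff, fun i => ?_⟩
      rw [pderivPi_sin_proj]
      exact mul_mem (Algebra.subset_adjoin (Or.inr (Or.inr ⟨j, rfl⟩)))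
        (Subalgebra.algebraMap_mem (TP n) _)
    · refine ⟨Real.contDiff_cos.comp
        (ContinuousLinearMap.proj j : (Fin n → ℝ) →L[ℝ] ℝ).contDiff, fun i => ?_⟩
      rw [pderivPi_cos_proj]
      exact mul_mem (neg_mem (Algebra.subset_adjoin (Or.inr (Or.inl ⟨j, rfl⟩))))
        (Subalgebra.algebraMap_mem (TP n) _)
  | algebraMap r =>
    refine ⟨contDiff_const, fun i => ?_⟩
    have : pderivPi i (algebraMap ℝ ((Fin n → ℝ) → ℝ) r) = fun _ => (0:ℝ) := by
      funext γ
      simp only [pderivPi]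
      rw [show (algebraMap ℝ ((Fin n → ℝ) → ℝ) r) = fun _ => r from rfl, fderiv_const_apply]
      simp
    rw [this]
    exact zero_mem _
  | add f g hf hg ihf ihg =>
    refine ⟨ihf.1.add ihg.1, fun i => ?_⟩
    have : pderivPi i (f + g) = pderivPi i f + pderivPi i g := by
      funext γ
      simp only [pderivPi, Pi.add_apply]
      rw [show (f + g) = fun γ => f γ + g γ from rfl,
        fderiv_fun_add (ihf.1.differentiable (by simp) γ) (ihg.1.differentiable (by simp) γ)]
      simp
    rw [this]
    exact add_mem (ihf.2 i) (ihg.2 i)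
  | mul f g hf hg ihf ihg =>
    refine ⟨ihf.1.mul ihg.1, fun i => ?_⟩
    have : pderivPi i (f * g) = f * pderivPi i g + pderivPi i f * g := by
      funext γ
      simp only [pderivPi, Pi.add_apply, Pi.mul_apply]
      rw [show (f * g) = fun γ => f γ * g γ from rfl,
        fderiv_fun_mul (ihf.1.differentiable (by simp) γ) (ihg.1.differentiable (by simp) γ)]
      simp
      ring
    rw [this]
    exact add_mem (mul_mem hf (ihg.2 i)) (mul_mem (ihf.2 i) hg)

theorem TP_smooth {n : ℕ} {a : (Fin n → ℝ) → ℝ} (ha : a ∈ TP n) : ContDiff ℝ ⊤ a :=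
  (TP_good ha).1

theorem TP_pderiv {n : ℕ} {a : (Fin n → ℝ) → ℝ} (ha : a ∈ TP n) (i : Fin n) :
    pderivPi i a ∈ TP n := (TP_good ha).2 i

theorem QQn_bdd {n : ℕ} (hn : 2 ≤ n) (j : Fin n) {γ : Fin n → ℝ} (hγ : γ ∈ QQn n hn) :
    |γ j| ≤ 2 * π + 1 := by
  obtain ⟨h0, hmid, hlast⟩ := hγ
  have hπ : (0:ℝ) ≤ π := Real.pi_nonneg
  rcases eq_or_ne j.val 0 with h | h
  · have : j = i0 n hn := by
      apply Fin.ext; simpa [i0] using h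
    rw [this]
    rw [abs_le]
    constructor <;> nlinarith [h0.1, h0.2]
  · rcases eq_or_ne j.val (n-1) with h' | h'
    · have : j = ilast n hn := by apply Fin.ext; simpa [ilast] using h'
      rw [this]
      rw [abs_le]
      constructor <;> nlinarith [hlast.1, hlast.2]
    · have hj := hmid j (by omega) (by have := j.isLt; omega)
      rw [abs_le]
      constructor <;> nlinarith [hj.1, hj.2]

theorem TP_bdd {n : ℕ} (hn : 2 ≤ n) {a : (Fin n → ℝ) → ℝ} (ha : a ∈ TP n) :
    ∃ M : ℝ, ∀ γ ∈ QQn n hn, |a γ| ≤ M := by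
  induction ha using Algebra.adjoin_induction with
  | mem f hf =>
    rcases hf with ⟨j, rfl⟩ | ⟨j, rfl⟩ | ⟨j, rfl⟩
    · exact ⟨2 * π + 1, fun γ hγ => QQn_bdd hn j hγ⟩
    · exact ⟨1, fun γ _ => Real.abs_sin_le_one _⟩
    · exact ⟨1, fun γ _ => Real.abs_cos_le_one _⟩
  | algebraMap r => exact ⟨|r|, fun γ _ => le_refl _⟩
  | add f g hf hg ihf ihg =>
    obtain ⟨M₁, h₁⟩ := ihf
    obtain ⟨M₂, h₂⟩ := ihg
    exact ⟨M₁ + M₂, fun γ hγ => (abs_add_le _ _).trans (add_le_add (h₁ γ hγ) (h₂ γ hγ))⟩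
  | mul f g hf hg ihf ihg =>
    obtain ⟨M₁, h₁⟩ := ihf
    obtain ⟨M₂, h₂⟩ := ihg
    refine ⟨M₁ * M₂, fun γ hγ => ?_⟩
    rw [show (f * g) γ = f γ * g γ from rfl, abs_mul]
    exact mul_le_mul (h₁ γ hγ) (h₂ γ hγ) (abs_nonneg _) ((abs_nonneg _).trans (h₁ γ hγ))

end Aux

section Aux2

/-- The index set `J = {j : 1 ≤ j ≤ n-2}` of the "middle" angular variables. -/
def Jset (n : ℕ) : Finset (Fin n) :=
  Finset.univ.filter (fun j : Fin n => 1 ≤ j.val ∧ j.val ≤ n - 2)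

/-- Product of powers of sines over the middle angular variables. -/
def SPow {n : ℕ} (e : Fin n → ℕ) : (Fin n → ℝ) → ℝ :=
  fun γ => ∏ j ∈ Jset n, Real.sin (γ j) ^ (e j)

theorem proj_memTP {n : ℕ} (j : Fin n) : (fun γ : Fin n → ℝ => γ j) ∈ TP n :=
  Algebra.subset_adjoin (Or.inl ⟨j, rfl⟩)

theorem sin_memTP {n : ℕ} (j : Fin n) : (fun γ : Fin n → ℝ => Real.sin (γ j)) ∈ TP n :=
  Algebra.subset_adjoin (Or.inr (Or.inl ⟨j, rfl⟩))

theorem cos_memTP {n : ℕ} (j : Fin n) : (fun γ : Fin n → ℝ => Real.cos (γ j)) ∈ TP n :=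
  Algebra.subset_adjoin (Or.inr (Or.inr ⟨j, rfl⟩))

theorem const_memTP {n : ℕ} (c : ℝ) : (fun _ : Fin n → ℝ => c) ∈ TP n :=
  Subalgebra.algebraMap_mem (TP n) c

theorem SPow_mem {n : ℕ} (e : Fin n → ℕ) : SPow e ∈ TP n := by
  have : SPow e = (∏ j ∈ Jset n, ((fun γ : Fin n → ℝ => Real.sin (γ j)) ^ (e j)) :
      (Fin n → ℝ) → ℝ) := by
    funext γ
    simp [SPow, Finset.prod_apply]
  rw [this]
  refine Subalgebra.prod_mem _ fun j _ => ?_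
  exact pow_mem (sin_memTP j) (e j)

theorem SPow_factor {n : ℕ} {e' e : Fin n → ℕ} (h : ∀ j, e' j ≤ e j) :
    SPow e = fun γ => SPow e' γ * SPow (fun j => e j - e' j) γ := by
  funext γ
  simp only [SPow, ← Finset.prod_mul_distrib]
  exact Finset.prod_congr rfl fun j _ => by
    rw [← pow_add, Nat.add_sub_cancel' (h j)]

theorem pderivPi_mul {n : ℕ} {u v : (Fin n → ℝ) → ℝ} (hu : Differentiable ℝ u)
    (hv : Differentiable ℝ v) (i : Fin n) :
    pderivPi i (fun γ => u γ * v γ) =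
      fun γ => pderivPi i u γ * v γ + u γ * pderivPi i v γ := by
  funext γ
  simp only [pderivPi]
  rw [fderiv_fun_mul (hu γ) (hv γ)]
  simp
  ring

theorem hasFDerivAt_prod {n : ℕ} (s : Finset (Fin n)) (f f' : Fin n → ℝ → ℝ)
    (hf : ∀ j x, HasDerivAt (f j) (f' j x) x) (γ : Fin n → ℝ) :
    HasFDerivAt (fun γ : Fin n → ℝ => ∏ j ∈ s, f j (γ j))
      (∑ j ∈ s, ((∏ l ∈ s.erase j, f l (γ l)) * f' j (γ j)) •
        (ContinuousLinearMap.proj j : (Fin n → ℝ) →L[ℝ] ℝ)) γ := by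
  classical
  induction s using Finset.induction_on with
  | empty => simpa using hasFDerivAt_const (1:ℝ) γ
  | @insert a s ha ih =>
    have hfa : HasFDerivAt (fun γ : Fin n → ℝ => f a (γ a))
        ((f' a (γ a)) • (ContinuousLinearMap.proj a : (Fin n → ℝ) →L[ℝ] ℝ)) γ :=
      (hf a (γ a)).comp_hasFDerivAt γ (hasFDerivAt_proj a γ)
    have h := hfa.mul ih
    have heq : (fun γ : Fin n → ℝ => ∏ j ∈ insert a s, f j (γ j)) =
        fun γ : Fin n → ℝ => f a (γ a) * ∏ j ∈ s, f j (γ j) := by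
      funext γ; rw [Finset.prod_insert ha]
    rw [heq]
    have hD : (∑ j ∈ insert a s, ((∏ l ∈ (insert a s).erase j, f l (γ l)) * f' j (γ j)) •
          (ContinuousLinearMap.proj j : (Fin n → ℝ) →L[ℝ] ℝ)) =
        f a (γ a) • (∑ j ∈ s, ((∏ l ∈ s.erase j, f l (γ l)) * f' j (γ j)) •
          (ContinuousLinearMap.proj j : (Fin n → ℝ) →L[ℝ] ℝ)) +
        (∏ j ∈ s, f j (γ j)) • ((f' a (γ a)) •
          (ContinuousLinearMap.proj a : (Fin n → ℝ) →L[ℝ] ℝ)) := by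
      rw [Finset.sum_insert ha, Finset.erase_insert ha, Finset.smul_sum, add_comm]
      congr 1
      · refine Finset.sum_congr rfl fun j hj => ?_
        rw [smul_smul, Finset.erase_insert_of_ne (show a ≠ j from fun h => ha (by rw [h]; exact hj)),
          Finset.prod_insert (fun h => ha (Finset.erase_subset _ _ h))]
        ring_nf
      · rw [smul_smul]
    rw [hD]
    exact h

theorem pderivPi_prod {n : ℕ} (s : Finset (Fin n)) (f f' : Fin n → ℝ → ℝ)
    (hf : ∀ j x, HasDerivAt (f j) (f' j x) x) (i : Fin n) :
    pderivPi i (fun γ : Fin n → ℝ => ∏ j ∈ s, f j (γ j)) =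
      fun γ => if i ∈ s then (∏ l ∈ s.erase i, f l (γ l)) * f' i (γ i) else 0 := by
  classical
  funext γ
  have h := (hasFDerivAt_prod s f f' hf γ).fderiv
  simp only [pderivPi, h]
  rw [ContinuousLinearMap.sum_apply]
  simp [ContinuousLinearMap.smul_apply, ContinuousLinearMap.proj_apply, Pi.single_apply,
    Finset.sum_ite_eq', mul_ite]

end Aux2

section Aux3

/-- The factors of the `k`-th coordinate of the spherical coordinate map. -/
def ff (n : ℕ) (k j : Fin n) : ℝ → ℝ :=
  if j.val = 0 then id
  else if j.val ≤ k.val then Real.sin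
  else if j.val = k.val + 1 then Real.cos
  else Function.const ℝ 1

/-- Derivatives of the factors. -/
def ff' (n : ℕ) (k j : Fin n) : ℝ → ℝ :=
  if j.val = 0 then Function.const ℝ 1
  else if j.val ≤ k.val then Real.cos
  else if j.val = k.val + 1 then (fun x => -Real.sin x)
  else Function.const ℝ 0

theorem hasDerivAt_ff (n : ℕ) (k j : Fin n) (x : ℝ) :
    HasDerivAt (ff n k j) (ff' n k j x) x := by
  unfold ff ff'
  split_ifs
  · exact hasDerivAt_id x
  · exact Real.hasDerivAt_sin x
  · exact Real.hasDerivAt_cos x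
  · exact hasDerivAt_const x 1

theorem ff_memTP {n : ℕ} (k l : Fin n) : (fun γ : Fin n → ℝ => ff n k l (γ l)) ∈ TP n := by
  unfold ff
  split_ifs
  · exact proj_memTP l
  · exact sin_memTP l
  · exact cos_memTP l
  · exact const_memTP 1

theorem ff'_memTP {n : ℕ} (k l : Fin n) : (fun γ : Fin n → ℝ => ff' n k l (γ l)) ∈ TP n := by
  unfold ff'
  split_ifs
  · exact const_memTP 1
  · exact cos_memTP l
  · exact neg_mem (sin_memTP l)
  · exact const_memTP 0

theorem prodfun_memTP {n : ℕ} (s : Finset (Fin n)) (F : Fin n → ℝ → ℝ)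
    (h : ∀ l ∈ s, (fun γ : Fin n → ℝ => F l (γ l)) ∈ TP n) :
    (fun γ : Fin n → ℝ => ∏ l ∈ s, F l (γ l)) ∈ TP n := by
  have heq : (fun γ : Fin n → ℝ => ∏ l ∈ s, F l (γ l)) =
      (∏ l ∈ s, (fun γ : Fin n → ℝ => F l (γ l)) : (Fin n → ℝ) → ℝ) := by
    funext γ; simp [Finset.prod_apply]
  rw [heq]
  exact Subalgebra.prod_mem _ h

theorem sph_apply_eq (n : ℕ) (hn : 2 ≤ n) (γ : Fin n → ℝ) (k : Fin n) :
    sph n hn γ k = ∏ j, ff n k j (γ j) := by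
  classical
  have h0 : i0 n hn ∈ (Finset.univ : Finset (Fin n)) := Finset.mem_univ _
  rw [← Finset.mul_prod_erase Finset.univ _ h0]
  have hff0 : ff n k (i0 n hn) (γ (i0 n hn)) = γ (i0 n hn) := by
    simp [ff, i0]
  rw [hff0]
  have hsplit := Finset.prod_filter_mul_prod_filter_not
    ((Finset.univ : Finset (Fin n)).erase (i0 n hn)) (fun j => j.val ≤ k.val)
    (fun j => ff n k j (γ j))
  rw [← hsplit]
  have hset : ((Finset.univ : Finset (Fin n)).erase (i0 n hn)).filter
      (fun j => j.val ≤ k.val) =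
      Finset.univ.filter (fun j : Fin n => 1 ≤ j.val ∧ j.val ≤ k.val) := by
    ext j
    simp [Finset.mem_erase, Fin.ext_iff, i0]
    omega
  have h1 : ∏ j ∈ ((Finset.univ : Finset (Fin n)).erase (i0 n hn)).filter
      (fun j => j.val ≤ k.val), ff n k j (γ j) =
      ∏ j ∈ Finset.univ.filter (fun j : Fin n => 1 ≤ j.val ∧ j.val ≤ k.val),
        Real.sin (γ j) := by
    rw [hset]
    refine Finset.prod_congr rfl fun j hj => ?_
    simp only [Finset.mem_filter] at hj
    have hj1 : j.val ≠ 0 := by omega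
    simp [ff, hj1, hj.2.2]
  have h2 : ∏ j ∈ ((Finset.univ : Finset (Fin n)).erase (i0 n hn)).filter
      (fun j => ¬ j.val ≤ k.val), ff n k j (γ j) =
      (if h : k.val + 1 < n then Real.cos (γ ⟨k.val + 1, h⟩) else 1) := by
    by_cases hk : k.val + 1 < n
    · rw [dif_pos hk]
      have heq : ∏ j ∈ ((Finset.univ : Finset (Fin n)).erase (i0 n hn)).filter
          (fun j => ¬ j.val ≤ k.val), ff n k j (γ j) =
          ff n k ⟨k.val + 1, hk⟩ (γ ⟨k.val + 1, hk⟩) := by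
        apply Finset.prod_eq_single (⟨k.val + 1, hk⟩ : Fin n)
        · intro b hb hbne
          simp only [Finset.mem_filter, Finset.mem_erase] at hb
          have hb0 : b.val ≠ 0 := by
            intro h; exact hb.1.1 (by apply Fin.ext; simpa [i0] using h)
          have hbk : ¬ b.val ≤ k.val := hb.2
          have hbk1 : b.val ≠ k.val + 1 := by
            intro h; exact hbne (by apply Fin.ext; simpa using h)
          simp [ff, hb0, hbk, hbk1, Function.const]
        · intro hnot
          exfalso
          apply hnot
          simp only [Finset.mem_filter, Finset.mem_erase]
          refine ⟨⟨?_, Finset.mem_univ _⟩, by omega⟩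
          intro h
          have := congrArg Fin.val h
          simp [i0] at this
      rw [heq]
      simp [ff, Nat.not_succ_le_self]
    · rw [dif_neg hk]
      apply Finset.prod_eq_one
      intro j hj
      simp only [Finset.mem_filter, Finset.mem_erase] at hj
      exfalso
      have := j.isLt
      omega
  rw [h1, h2]
  simp only [sph]
  ring

theorem sph_coord_memTP {n : ℕ} (hn : 2 ≤ n) (k : Fin n) :
    (fun γ : Fin n → ℝ => sph n hn γ k) ∈ TP n := by
  have : (fun γ : Fin n → ℝ => sph n hn γ k) = fun γ => ∏ j, ff n k j (γ j) := by
    funext γ; exact sph_apply_eq n hn γ k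
  rw [this]
  exact prodfun_memTP _ _ fun l _ => ff_memTP k l

/-- Partial derivative of a coordinate of `sph`, with the sine factors it contains. -/
theorem sphPD_decomp {n : ℕ} (hn : 2 ≤ n) (i k : Fin n) :
    ∃ b ∈ TP n, pderivPi i (fun γ : Fin n → ℝ => sph n hn γ k) =
      fun γ => SPow (fun j => if j.val < i.val then 1 else 0) γ * b γ := by
  classical
  have hrw : (fun γ : Fin n → ℝ => sph n hn γ k) = fun γ => ∏ j, ff n k j (γ j) := by
    funext γ; exact sph_apply_eq n hn γ k
  have hPD := pderivPi_prod Finset.univ (ff n k) (ff' n k) (hasDerivAt_ff n k) i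
  have hSP : ∀ γ : Fin n → ℝ, SPow (fun j => if j.val < i.val then (1:ℕ) else 0) γ =
      ∏ j ∈ (Jset n).filter (fun j => j.val < i.val), Real.sin (γ j) := by
    intro γ
    rw [SPow, ← Finset.prod_filter_mul_prod_filter_not (Jset n) (fun j => j.val < i.val)]
    have : ∏ j ∈ (Jset n).filter (fun j => ¬ j.val < i.val),
        Real.sin (γ j) ^ (if j.val < i.val then (1:ℕ) else 0) = 1 := by
      apply Finset.prod_eq_one
      intro j hj
      simp only [Finset.mem_filter] at hj
      simp [hj.2]
    rw [this, mul_one]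
    refine Finset.prod_congr rfl fun j hj => ?_
    simp only [Finset.mem_filter] at hj
    simp [hj.2]
  by_cases hik : i.val ≤ k.val + 1
  · -- the sine factors for `j < i` are present in the product
    set T := (Jset n).filter (fun j => j.val < i.val) with hT
    have hTsub : T ⊆ Finset.univ.erase i := by
      intro j hj
      simp only [hT, Finset.mem_filter, Jset, Finset.mem_erase] at hj ⊢
      exact ⟨fun h => by have := congrArg Fin.val h; omega, Finset.mem_univ _⟩
    refine ⟨fun γ => (∏ l ∈ (Finset.univ.erase i) \ T, ff n k l (γ l)) * ff' n k i (γ i),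
      mul_mem (prodfun_memTP _ _ fun l _ => ff_memTP k l) (ff'_memTP k i), ?_⟩
    rw [hrw, hPD]
    funext γ
    simp only [Finset.mem_univ, if_true]
    rw [hSP γ]
    have hprod : ∏ l ∈ Finset.univ.erase i, ff n k l (γ l) =
        (∏ l ∈ T, Real.sin (γ l)) * ∏ l ∈ (Finset.univ.erase i) \ T, ff n k l (γ l) := by
      rw [← Finset.prod_sdiff hTsub, mul_comm]
      congr 1
      refine Finset.prod_congr rfl fun l hl => ?_
      simp only [hT, Finset.mem_filter, Jset] at hl
      have h1 : l.val ≠ 0 := by omega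
      have h2 : l.val ≤ k.val := by omega
      simp [ff, h1, h2]
    rw [hprod]
    ring
  · -- the derivative vanishes
    refine ⟨0, zero_mem _, ?_⟩
    rw [hrw, hPD]
    funext γ
    simp only [Finset.mem_univ, if_true]
    have : ff' n k i (γ i) = 0 := by
      have h0 : i.val ≠ 0 := by omega
      have h1 : ¬ i.val ≤ k.val := by omega
      have h2 : i.val ≠ k.val + 1 := by omega
      simp [ff', h0, h1, h2, Function.const]
    rw [this]
    simp

end Aux3

section Aux4

/-- Iterated Cartesian partial derivatives indexed by a list. -/
def Dlist {n : ℕ} (l : List (Fin n)) (f : E n → ℂ) : E n → ℂ := l.foldr pderivE f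

theorem Dlist_nil {n : ℕ} (f : E n → ℂ) : Dlist [] f = f := rfl

theorem Dlist_cons {n : ℕ} (a : Fin n) (l : List (Fin n)) (f : E n → ℂ) :
    Dlist (a :: l) f = pderivE a (Dlist l f) := rfl

theorem Dlist_append {n : ℕ} (l₁ l₂ : List (Fin n)) (f : E n → ℂ) :
    Dlist (l₁ ++ l₂) f = Dlist l₁ (Dlist l₂ f) := List.foldr_append ..

theorem pderivE_contDiffOn {n N m : ℕ} {f : E n → ℂ} {s : Set (E n)} (hs : IsOpen s)
    (hf : ContDiffOn ℝ (N : ℕ∞) f s) (h : m + 1 ≤ N) (i : Fin n) :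
    ContDiffOn ℝ (m : ℕ∞) (pderivE i f) s := by
  have h1 : ContDiffOn ℝ (m : ℕ∞) (fderiv ℝ f) s :=
    hf.fderiv_of_isOpen hs (by exact_mod_cast h)
  have h2 := (ContinuousLinearMap.apply ℝ ℂ
    (EuclideanSpace.single i (1:ℝ))).contDiff.comp_contDiffOn h1
  exact h2

theorem Dlist_contDiffOn {n N : ℕ} {f : E n → ℂ} {s : Set (E n)} (hs : IsOpen s)
    (hf : ContDiffOn ℝ (N : ℕ∞) f s) :
    ∀ (l : List (Fin n)) (m : ℕ), l.length + m ≤ N → ContDiffOn ℝ (m : ℕ∞) (Dlist l f) s := by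
  intro l
  induction l with
  | nil => intro m hm; exact hf.of_le (by exact_mod_cast hm.trans' (by simp))
  | cons a l ih =>
    intro m hm
    rw [Dlist_cons]
    have := ih (m + 1) (by simp only [List.length_cons] at hm; omega)
    exact pderivE_contDiffOn hs (by exact_mod_cast this) le_rfl a

theorem pderivE_congr {n : ℕ} {F G : E n → ℂ} {s : Set (E n)} (hs : IsOpen s)
    (h : ∀ y ∈ s, F y = G y) {x : E n} (hx : x ∈ s) (i : Fin n) :
    pderivE i F x = pderivE i G x := by
  simp only [pderivE]
  rw [Filter.EventuallyEq.fderiv_eq (Filter.eventuallyEq_of_mem (hs.mem_nhds hx) h)]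

theorem pderivE_comm {n : ℕ} {f : E n → ℂ} {s : Set (E n)} (hs : IsOpen s)
    (hf : ContDiffOn ℝ (2 : ℕ∞) f s) (a b : Fin n) {x : E n} (hx : x ∈ s) :
    pderivE a (pderivE b f) x = pderivE b (pderivE a f) x := by
  have hat : ContDiffAt ℝ (2 : ℕ∞) f x := hf.contDiffAt (hs.mem_nhds hx)
  have hsymm := hat.isSymmSndFDerivAt (by simp)
  have hdiff : DifferentiableAt ℝ (fderiv ℝ f) x :=
    (hat.fderiv_right (m := 1) (by norm_num)).differentiableAt (by norm_num)
  have key : ∀ v : E n, fderiv ℝ (fun y => fderiv ℝ f y v) x =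
      (fderiv ℝ (fderiv ℝ f) x).flip v := by
    intro v
    rw [fderiv_clm_apply hdiff (differentiableAt_const v), fderiv_const_apply]
    simp
  have h1 : pderivE a (pderivE b f) x =
      fderiv ℝ (fderiv ℝ f) x (EuclideanSpace.single a (1:ℝ))
        (EuclideanSpace.single b (1:ℝ)) := by
    show fderiv ℝ (fun y => fderiv ℝ f y (EuclideanSpace.single b (1:ℝ))) x
      (EuclideanSpace.single a (1:ℝ)) = _
    rw [key (EuclideanSpace.single b (1:ℝ))]
    rfl
  have h2 : pderivE b (pderivE a f) x =
      fderiv ℝ (fderiv ℝ f) x (EuclideanSpace.single b (1:ℝ))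
        (EuclideanSpace.single a (1:ℝ)) := by
    show fderiv ℝ (fun y => fderiv ℝ f y (EuclideanSpace.single a (1:ℝ))) x
      (EuclideanSpace.single b (1:ℝ)) = _
    rw [key (EuclideanSpace.single a (1:ℝ))]
    rfl
  rw [h1, h2, hsymm]

theorem Dlist_congrOn {n : ℕ} {F G : E n → ℂ} {s : Set (E n)} (hs : IsOpen s)
    (h : ∀ y ∈ s, F y = G y) (l : List (Fin n)) :
    ∀ x ∈ s, Dlist l F x = Dlist l G x := by
  induction l with
  | nil => exact h
  | cons a l ih =>
    intro x hx
    rw [Dlist_cons, Dlist_cons]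
    exact pderivE_congr hs ih hx a

theorem Dlist_perm {n N : ℕ} {f : E n → ℂ} {s : Set (E n)} (hs : IsOpen s)
    (hf : ContDiffOn ℝ (N : ℕ∞) f s) {l l' : List (Fin n)} (hperm : l.Perm l') :
    l.length ≤ N → ∀ x ∈ s, Dlist l f x = Dlist l' f x := by
  induction hperm with
  | nil => intro _ x _; rfl
  | cons a h ih =>
    intro hlen x hx
    rw [Dlist_cons, Dlist_cons]
    exact pderivE_congr hs (fun y hy => ih (by simpa using Nat.le_of_succ_le hlen) y hy) hx a
  | swap a b l =>
    intro hlen x hx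
    have h2 : ContDiffOn ℝ ((2:ℕ) : ℕ∞) (Dlist l f) s :=
      Dlist_contDiffOn hs hf l 2 (by simp at hlen; omega)
    rw [Dlist_cons, Dlist_cons, Dlist_cons, Dlist_cons]
    exact pderivE_comm hs (by exact_mod_cast h2) b a hx
  | trans h1 h2 ih1 ih2 =>
    intro hlen x hx
    rw [ih1 hlen x hx, ih2 (h1.length_eq ▸ hlen) x hx]

/-- The canonical derivative list of a multi-index. -/
def ofβ {n : ℕ} (β : Fin n → ℕ) : List (Fin n) :=
  (List.finRange n).flatMap (fun i => List.replicate (β i) i)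

theorem iterate_pderivE_eq {n : ℕ} (i : Fin n) (m : ℕ) (f : E n → ℂ) :
    (pderivE i)^[m] f = Dlist (List.replicate m i) f := by
  induction m with
  | zero => rfl
  | succ m ih => rw [Function.iterate_succ_apply', ih, List.replicate_succ, Dlist_cons]

theorem Dmulti_eq_Dlist {n : ℕ} (β : Fin n → ℕ) (f : E n → ℂ) :
    Dmulti β f = Dlist (ofβ β) f := by
  rw [Dmulti, ofβ]
  induction (List.finRange n) with
  | nil => rfl
  | cons a L ih =>
    rw [List.foldr_cons, ih, List.flatMap_cons, Dlist_append, iterate_pderivE_eq]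

theorem count_ofβ {n : ℕ} (β : Fin n → ℕ) (a : Fin n) : (ofβ β).count a = β a := by
  have key : ∀ L : List (Fin n),
      ((L.flatMap fun i => List.replicate (β i) i).count a) =
        (L.map fun i => if i = a then β i else 0).sum := by
    intro L
    induction L with
    | nil => simp
    | cons b L ih =>
      rw [List.flatMap_cons, List.count_append, ih, List.map_cons, List.sum_cons,
        List.count_replicate]
      congr 1
      by_cases h : b = a <;> simp [h]
  rw [ofβ, key]
  rw [← Fin.sum_univ_def]
  simp

theorem sum_count_eq_length {n : ℕ} (l : List (Fin n)) : ∑ i, l.count i = l.length := by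
  induction l with
  | nil => simp
  | cons a l ih =>
    simp only [List.count_cons, List.length_cons]
    rw [Finset.sum_add_distrib, ih]
    congr 1
    simp

end Aux4

section Aux5

theorem sph_contDiff {n : ℕ} (hn : 2 ≤ n) : ContDiff ℝ ⊤ (sph n hn) := by
  rw [contDiff_euclidean]
  exact fun k => TP_smooth (sph_coord_memTP hn k)

/-- Sine-squared products for the telescoping norm computation. -/
private def Qpr {n : ℕ} (γ : Fin n → ℝ) (m : ℕ) : ℝ :=
  ∏ j ∈ Finset.univ.filter (fun j : Fin n => 1 ≤ j.val ∧ j.val ≤ m), Real.sin (γ j) ^ 2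

theorem sph_sum_sq {n : ℕ} (hn : 2 ≤ n) (γ : Fin n → ℝ) :
    ∑ i, (sph n hn γ i) ^ 2 = (γ (i0 n hn)) ^ 2 := by
  classical
  have hterm : ∀ i : Fin n, (sph n hn γ i) ^ 2 =
      (γ (i0 n hn)) ^ 2 * (Qpr γ i.val *
        (if h : i.val + 1 < n then Real.cos (γ ⟨i.val + 1, h⟩) ^ 2 else 1)) := by
    intro i
    show (γ (i0 n hn) * (∏ j ∈ Finset.univ.filter
        (fun j : Fin n => 1 ≤ j.val ∧ j.val ≤ i.val), Real.sin (γ j)) *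
        (if h : i.val + 1 < n then Real.cos (γ ⟨i.val + 1, h⟩) else 1)) ^ 2 = _
    rw [mul_pow, mul_pow, ← Finset.prod_pow, mul_assoc]
    unfold Qpr
    congr 1
    congr 1
    by_cases h : i.val + 1 < n
    · rw [dif_pos h, dif_pos h]
    · rw [dif_neg h, dif_neg h, one_pow]
  have hQstep : ∀ (m : ℕ) (hm : m + 1 < n), Qpr γ m * Real.sin (γ ⟨m + 1, hm⟩) ^ 2 =
      Qpr γ (m + 1) := by
    intro m hm
    rw [Qpr, Qpr]
    have hins : Finset.univ.filter (fun j : Fin n => 1 ≤ j.val ∧ j.val ≤ m + 1) =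
        insert (⟨m + 1, hm⟩ : Fin n)
          (Finset.univ.filter (fun j : Fin n => 1 ≤ j.val ∧ j.val ≤ m)) := by
      ext j
      simp [Finset.mem_insert, Fin.ext_iff]
      omega
    rw [hins, Finset.prod_insert (by simp), mul_comm]
  have hsum : ∑ i : Fin n, (Qpr γ i.val *
      (if h : i.val + 1 < n then Real.cos (γ ⟨i.val + 1, h⟩) ^ 2 else 1)) = 1 := by
    rw [Fin.sum_univ_eq_sum_range (fun m => Qpr γ m *
      (if h : m + 1 < n then Real.cos (γ ⟨m + 1, h⟩) ^ 2 else 1))]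
    obtain ⟨n', rfl⟩ : ∃ n', n = n' + 1 := ⟨n - 1, by omega⟩
    rw [Finset.sum_range_succ]
    have hlast : Qpr γ n' * (if h : n' + 1 < n' + 1 then Real.cos (γ ⟨n' + 1, h⟩) ^ 2 else 1)
        = Qpr γ n' := by rw [dif_neg (by omega), mul_one]
    rw [hlast]
    have hmain : ∀ m ∈ Finset.range n', Qpr γ m *
        (if h : m + 1 < n' + 1 then Real.cos (γ ⟨m + 1, h⟩) ^ 2 else 1) =
        Qpr γ m - Qpr γ (m + 1) := by
      intro m hm
      rw [Finset.mem_range] at hm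
      rw [dif_pos (by omega)]
      rw [Real.cos_sq']
      rw [mul_sub, mul_one, hQstep m (by omega)]
    rw [Finset.sum_congr rfl hmain, Finset.sum_range_sub' (fun m => Qpr γ m)]
    have hQ0 : Qpr γ 0 = 1 := by
      rw [Qpr]
      apply Finset.prod_eq_one
      intro j hj
      simp only [Finset.mem_filter, Finset.mem_univ, true_and] at hj
      omega
    rw [hQ0]
    ring
  calc ∑ i, (sph n hn γ i) ^ 2
      = ∑ i : Fin n, (γ (i0 n hn)) ^ 2 * (Qpr γ i.val *
        (if h : i.val + 1 < n then Real.cos (γ ⟨i.val + 1, h⟩) ^ 2 else 1)) :=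
        Finset.sum_congr rfl fun i _ => hterm i
    _ = (γ (i0 n hn)) ^ 2 * ∑ i : Fin n, (Qpr γ i.val *
        (if h : i.val + 1 < n then Real.cos (γ ⟨i.val + 1, h⟩) ^ 2 else 1)) := by
        rw [Finset.mul_sum]
    _ = (γ (i0 n hn)) ^ 2 := by rw [hsum, mul_one]

theorem sph_norm {n : ℕ} (hn : 2 ≤ n) (γ : Fin n → ℝ) :
    ‖sph n hn γ‖ = |γ (i0 n hn)| := by
  rw [EuclideanSpace.norm_eq]
  have : ∀ i, ‖sph n hn γ i‖ ^ 2 = (sph n hn γ i) ^ 2 := fun i => sq_abs _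
  rw [Finset.sum_congr rfl fun i _ => this i, sph_sum_sq hn γ, Real.sqrt_sq_eq_abs]

/-- The open region of parameter space mapping into the ball. -/
def Usph (n : ℕ) (hn : 2 ≤ n) : Set (Fin n → ℝ) := {γ | |γ (i0 n hn)| < 1}

theorem Usph_open {n : ℕ} (hn : 2 ≤ n) : IsOpen (Usph n hn) :=
  isOpen_lt ((continuous_apply (i0 n hn)).abs) continuous_const

theorem QQn_subset_Usph {n : ℕ} (hn : 2 ≤ n) : QQn n hn ⊆ Usph n hn := by
  intro γ hγ
  have := hγ.1
  simp only [Usph, Set.mem_setOf_eq]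
  rw [abs_lt]
  constructor <;> [linarith [this.1]; exact this.2]

theorem sph_mem_Ball {n : ℕ} (hn : 2 ≤ n) {γ : Fin n → ℝ} (hγ : γ ∈ Usph n hn) :
    sph n hn γ ∈ Ball n := by
  rw [Ball, mem_ball_zero_iff, sph_norm hn]
  exact hγ

theorem pderivPi_ofReal {n : ℕ} {a : (Fin n → ℝ) → ℝ} {γ : Fin n → ℝ}
    (ha : DifferentiableAt ℝ a γ) (i : Fin n) :
    pderivPi i (fun γ' => ((a γ' : ℝ) : ℂ)) γ = ((pderivPi i a γ : ℝ) : ℂ) := by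
  have heq : (fun γ' => ((a γ' : ℝ) : ℂ)) = Complex.ofRealCLM ∘ a := rfl
  show fderiv ℝ (fun γ' => ((a γ' : ℝ) : ℂ)) γ (Pi.single i 1) = _
  rw [heq, fderiv_comp γ Complex.ofRealCLM.differentiableAt ha,
    ContinuousLinearMap.fderiv]
  rfl

theorem pderivPi_mulC {n : ℕ} {a : (Fin n → ℝ) → ℝ} {H : (Fin n → ℝ) → ℂ} {γ : Fin n → ℝ}
    (ha : DifferentiableAt ℝ a γ) (hH : DifferentiableAt ℝ H γ) (i : Fin n) :
    pderivPi i (fun γ' => (a γ' : ℂ) * H γ') γ =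
      ((pderivPi i a γ : ℝ) : ℂ) * H γ + (a γ : ℂ) * pderivPi i H γ := by
  have haC : DifferentiableAt ℝ (fun γ' => ((a γ' : ℝ) : ℂ)) γ :=
    Complex.ofRealCLM.differentiableAt.comp γ ha
  show fderiv ℝ (fun γ' => (a γ' : ℂ) * H γ') γ (Pi.single i 1) = _
  rw [fderiv_fun_mul haC hH]
  rw [← pderivPi_ofReal ha i]
  simp only [ContinuousLinearMap.add_apply, ContinuousLinearMap.smul_apply, smul_eq_mul]
  show (a γ : ℂ) * (pderivPi i H γ) + H γ * (pderivPi i (fun γ' => ((a γ' : ℝ) : ℂ)) γ) = _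
  ring

theorem euclid_decomp {n : ℕ} (v : E n) :
    v = ∑ k, v k • EuclideanSpace.single k (1 : ℝ) := by
  have h := (EuclideanSpace.basisFun (Fin n) ℝ).sum_repr v
  conv_lhs => rw [← h]
  refine Finset.sum_congr rfl fun k _ => ?_
  rw [EuclideanSpace.basisFun_repr, EuclideanSpace.basisFun_apply]

theorem chain_rule {n : ℕ} (hn : 2 ≤ n) {F : E n → ℂ} {γ : Fin n → ℝ}
    (hF : DifferentiableAt ℝ F (sph n hn γ)) (i : Fin n) :
    pderivPi i (fun γ' => F (sph n hn γ')) γ =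
      ∑ k, ((pderivPi i (fun γ' : Fin n → ℝ => sph n hn γ' k) γ : ℝ) : ℂ) *
        pderivE k F (sph n hn γ) := by
  have hσ : DifferentiableAt ℝ (sph n hn) γ :=
    ((sph_contDiff hn).differentiable (by simp)) γ
  have hco : ∀ k : Fin n, pderivPi i (fun γ' : Fin n → ℝ => sph n hn γ' k) γ =
      (fderiv ℝ (sph n hn) γ (Pi.single i 1)) k := by
    intro k
    show fderiv ℝ ((EuclideanSpace.proj k) ∘ (sph n hn)) γ (Pi.single i 1) = _
    rw [fderiv_comp γ (EuclideanSpace.proj k).differentiableAt hσ,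
      ContinuousLinearMap.fderiv]
    rfl
  show fderiv ℝ (F ∘ (sph n hn)) γ (Pi.single i 1) = _
  rw [fderiv_comp γ hF hσ]
  show fderiv ℝ F (sph n hn γ) (fderiv ℝ (sph n hn) γ (Pi.single i 1)) = _
  set v := fderiv ℝ (sph n hn) γ (Pi.single i 1) with hv
  rw [euclid_decomp (n := n) v]
  rw [map_sum]
  refine Finset.sum_congr rfl fun k _ => ?_
  rw [ContinuousLinearMap.map_smul]
  rw [hco k]
  rw [Complex.real_smul]
  rfl

theorem differentiableAt_list_sum {n : ℕ} {ι : Type} (l : List ι)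
    (G : ι → (Fin n → ℝ) → ℂ) (γ : Fin n → ℝ)
    (h : ∀ p ∈ l, DifferentiableAt ℝ (G p) γ) :
    DifferentiableAt ℝ (fun γ' => (l.map (fun p => G p γ')).sum) γ := by
  induction l with
  | nil => simpa using differentiableAt_const (0 : ℂ)
  | cons a l ih =>
    simp only [List.map_cons, List.sum_cons]
    exact (h a (List.mem_cons_self)).add
      (ih fun p hp => h p (List.mem_cons_of_mem a hp))

theorem pderivPi_list_sum {n : ℕ} {ι : Type} (l : List ι)
    (G : ι → (Fin n → ℝ) → ℂ) (γ : Fin n → ℝ) (i : Fin n)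
    (h : ∀ p ∈ l, DifferentiableAt ℝ (G p) γ) :
    pderivPi i (fun γ' => (l.map (fun p => G p γ')).sum) γ =
      (l.map (fun p => pderivPi i (G p) γ)).sum := by
  induction l with
  | nil =>
    simp only [List.map_nil, List.sum_nil]
    show fderiv ℝ (fun _ => (0:ℂ)) γ (Pi.single i 1) = 0
    rw [fderiv_const_apply]
    rfl
  | cons a l ih =>
    simp only [List.map_cons, List.sum_cons]
    have hrest : DifferentiableAt ℝ (fun γ' => (l.map (fun p => G p γ')).sum) γ :=
      differentiableAt_list_sum l G γ fun p hp => h p (List.mem_cons_of_mem a hp)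
    show fderiv ℝ (fun γ' => G a γ' + (l.map (fun p => G p γ')).sum) γ (Pi.single i 1) = _
    rw [fderiv_fun_add (h a (List.mem_cons_self)) hrest]
    rw [← ih fun p hp => h p (List.mem_cons_of_mem a hp)]
    rfl

end Aux5

section Aux6

theorem SPow_mul {n : ℕ} (e₁ e₂ : Fin n → ℕ) (γ : Fin n → ℝ) :
    SPow e₁ γ * SPow e₂ γ = SPow (fun j => e₁ j + e₂ j) γ := by
  simp only [SPow, ← Finset.prod_mul_distrib]
  exact Finset.prod_congr rfl fun j _ => (pow_add _ _ _).symm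

theorem TP_differentiable {n : ℕ} {a : (Fin n → ℝ) → ℝ} (ha : a ∈ TP n) :
    Differentiable ℝ a := (TP_smooth ha).differentiable (by simp)

/-- Leibniz term: differentiating the coefficient. -/
theorem term1 {n : ℕ} (E : Fin n → ℕ) {b : (Fin n → ℝ) → ℝ} (hb : b ∈ TP n) (i : Fin n)
    (E' : Fin n → ℕ) (hE' : ∀ j, E' j = E j - (if i.val ≤ j.val then 1 else 0)) :
    ∃ b' ∈ TP n, pderivPi i (fun γ => SPow E γ * b γ) = fun γ => SPow E' γ * b' γ := by
  classical
  have hEle : ∀ j, E' j ≤ E j := fun j => by rw [hE' j]; omega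
  have hSP : SPow E = fun γ : Fin n → ℝ =>
      ∏ j ∈ Jset n, (fun x => Real.sin x ^ E j) (γ j) := rfl
  have hder : ∀ (j : Fin n) (x : ℝ),
      HasDerivAt (fun x => Real.sin x ^ E j)
        ((E j : ℝ) * Real.sin x ^ (E j - 1) * Real.cos x) x :=
    fun j x => (Real.hasDerivAt_sin x).pow _
  have hmul := pderivPi_mul (u := SPow E) (v := b)
    (TP_differentiable (SPow_mem E)) (TP_differentiable hb) i
  have hprodD := pderivPi_prod (Jset n) (fun j => fun x => Real.sin x ^ E j)
    (fun j => fun x => (E j : ℝ) * Real.sin x ^ (E j - 1) * Real.cos x) hder i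
  rw [← hSP] at hprodD
  by_cases hi : i ∈ Jset n
  · set Ef := Function.update E i (E i - 1) with hEf
    have hE'le : ∀ j, E' j ≤ Ef j := by
      intro j
      rcases eq_or_ne j i with rfl | hne
      · rw [hE' j, hEf, Function.update_self]
        simp
      · rw [hEf, Function.update_of_ne hne]
        exact hEle j
    refine ⟨(fun γ => SPow (fun j => Ef j - E' j) γ * ((E i : ℝ) * Real.cos (γ i)) * b γ)
      + (fun γ => SPow (fun j => E j - E' j) γ * pderivPi i b γ), ?_, ?_⟩
    · exact add_mem
        (mul_mem (mul_mem (SPow_mem _) (mul_mem (const_memTP _) (cos_memTP i))) hb)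
        (mul_mem (SPow_mem _) (TP_pderiv hb i))
    · funext γ
      rw [hmul]
      rw [hprodD]
      beta_reduce
      rw [if_pos hi]
      have hfact : (∏ l ∈ (Jset n).erase i, Real.sin (γ l) ^ E l) *
          Real.sin (γ i) ^ (E i - 1) = SPow Ef γ := by
        rw [SPow, ← Finset.mul_prod_erase (Jset n) _ hi]
        rw [hEf, Function.update_self, mul_comm]
        congr 1
        exact Finset.prod_congr rfl fun l hl =>
          by rw [Function.update_of_ne (Finset.ne_of_mem_erase hl)]
      have h1 : SPow Ef γ = SPow E' γ * SPow (fun j => Ef j - E' j) γ := by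
        rw [SPow_factor hE'le]
      have h2 : SPow E γ = SPow E' γ * SPow (fun j => E j - E' j) γ := by
        rw [SPow_factor hEle]
      simp only [Pi.add_apply]
      calc (∏ l ∈ (Jset n).erase i, Real.sin (γ l) ^ E l) *
            ((E i : ℝ) * Real.sin (γ i) ^ (E i - 1) * Real.cos (γ i)) * b γ
            + SPow E γ * pderivPi i b γ
          = ((∏ l ∈ (Jset n).erase i, Real.sin (γ l) ^ E l) * Real.sin (γ i) ^ (E i - 1))
            * ((E i : ℝ) * Real.cos (γ i)) * b γ + SPow E γ * pderivPi i b γ := by ring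
        _ = SPow Ef γ * ((E i : ℝ) * Real.cos (γ i)) * b γ
            + SPow E γ * pderivPi i b γ := by rw [hfact]
        _ = _ := by rw [h1, h2]; ring
  · refine ⟨fun γ => SPow (fun j => E j - E' j) γ * pderivPi i b γ,
      mul_mem (SPow_mem _) (TP_pderiv hb i), ?_⟩
    funext γ
    rw [hmul, hprodD]
    beta_reduce
    rw [if_neg hi]
    have h2 : SPow E γ = SPow E' γ * SPow (fun j => E j - E' j) γ := by
      rw [SPow_factor hEle]
    rw [h2]
    ring

/-- Chain-rule term: a derivative of `sph` multiplies the coefficient. -/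
theorem term2 {n : ℕ} (hn : 2 ≤ n) (E : Fin n → ℕ) {b : (Fin n → ℝ) → ℝ} (hb : b ∈ TP n)
    (i k : Fin n) (E' : Fin n → ℕ)
    (hE' : ∀ j, E' j ≤ E j + (if j.val < i.val then 1 else 0)) :
    ∃ b' ∈ TP n,
      (fun γ => pderivPi i (fun γ' : Fin n → ℝ => sph n hn γ' k) γ * (SPow E γ * b γ)) =
        fun γ => SPow E' γ * b' γ := by
  obtain ⟨bk, hbk, hdec⟩ := sphPD_decomp hn i k
  set ind : Fin n → ℕ := fun j => if j.val < i.val then 1 else 0 with hind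
  have hle : ∀ j, E' j ≤ E j + ind j := hE'
  refine ⟨fun γ => SPow (fun j => (E j + ind j) - E' j) γ * (bk γ * b γ),
    mul_mem (SPow_mem _) (mul_mem hbk hb), ?_⟩
  funext γ
  rw [hdec]
  have h1 : SPow ind γ * SPow E γ = SPow (fun j => E j + ind j) γ := by
    rw [SPow_mul]
    congr 1
    funext j
    omega
  have h2 : SPow (fun j => E j + ind j) γ =
      SPow E' γ * SPow (fun j => (E j + ind j) - E' j) γ := by
    rw [SPow_factor hle]
  calc SPow ind γ * bk γ * (SPow E γ * b γ)
      = (SPow ind γ * SPow E γ) * (bk γ * b γ) := by ring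
    _ = SPow (fun j => E j + ind j) γ * (bk γ * b γ) := by rw [h1]
    _ = SPow E' γ * (SPow (fun j => (E j + ind j) - E' j) γ * (bk γ * b γ)) := by
        rw [h2]; ring

theorem pderivPi_congr {n : ℕ} {F G : (Fin n → ℝ) → ℂ} {s : Set (Fin n → ℝ)} (hs : IsOpen s)
    (h : ∀ y ∈ s, F y = G y) {x : Fin n → ℝ} (hx : x ∈ s) (i : Fin n) :
    pderivPi i F x = pderivPi i G x := by
  simp only [pderivPi]
  rw [Filter.EventuallyEq.fderiv_eq (Filter.eventuallyEq_of_mem (hs.mem_nhds hx) h)]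

theorem list_sum_flatMap {α β : Type} (l : List α) (f : α → List β) (h : β → ℂ) :
    (((l.flatMap f).map h).sum) = (l.map (fun a => ((f a).map h).sum)).sum := by
  induction l with
  | nil => rfl
  | cons a l ih => rw [List.flatMap_cons, List.map_append, List.sum_append, ih,
      List.map_cons, List.sum_cons]

end Aux6

section Main

def cntL {n : ℕ} (L : List (Fin n)) (j : Fin n) : ℕ :=
  L.countP (fun l => decide (l.val ≤ j.val))

theorem cntL_cons {n : ℕ} (i : Fin n) (L : List (Fin n)) (j : Fin n) :
    cntL (i :: L) j = cntL L j + (if i.val ≤ j.val then 1 else 0) := by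
  rw [cntL, cntL, List.countP_cons]
  by_cases h : i.val ≤ j.val <;> simp [h]

/-- The invariant carried through the induction on the list of spherical derivatives. -/
def Inv (n : ℕ) (hn : 2 ≤ n) (g : E n → ℂ) (L : List (Fin n))
    (P : List (List (Fin n) × ((Fin n → ℝ) → ℝ))) : Prop :=
  (∀ p ∈ P, p.1.length ≤ L.length) ∧
  (L ≠ [] → ∀ p ∈ P, p.1 = [] → p.2 = fun _ => 0) ∧
  (L = [] → P = [([], fun _ => 1)]) ∧
  (∀ p ∈ P, ∃ b ∈ TP n, p.2 = fun γ => SPow (fun j => p.1.length - cntL L j) γ * b γ) ∧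
  (∀ γ ∈ Usph n hn, List.foldr pderivPi (fun γ' => g (sph n hn γ')) L γ =
    (P.map (fun p => ((p.2 γ : ℝ) : ℂ) * Dlist p.1 g (sph n hn γ))).sum)

theorem key_s16 (n : ℕ) (hn : 2 ≤ n) (g : E n → ℂ) (hg : ContDiffOn ℝ (n : ℕ∞) g (Ball n)) :
    ∀ L : List (Fin n), L.length ≤ n → ∃ P, Inv n hn g L P := by
  intro L
  induction L with
  | nil =>
    intro _
    refine ⟨[([], fun _ => 1)], ?_, ?_, ?_, ?_, ?_⟩
    · intro p hp
      rw [List.mem_singleton] at hp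
      rw [hp]
    · intro h; exact absurd rfl h
    · intro _; rfl
    · intro p hp
      rw [List.mem_singleton] at hp
      refine ⟨fun _ => 1, const_memTP 1, ?_⟩
      rw [hp]
      funext γ
      simp [SPow]
    · intro γ _
      simp [Dlist]
  | cons i L' ih =>
    intro hlen
    obtain ⟨P', hP'⟩ := ih (by simp only [List.length_cons] at hlen; omega)
    obtain ⟨h1, h2, h3, h4, h5⟩ := hP'
    set PP := P'.flatMap (fun p => (p.1, pderivPi i p.2) ::
      (List.finRange n).map (fun k => ((k :: p.1 : List (Fin n)),
        fun γ => pderivPi i (fun γ' : Fin n → ℝ => sph n hn γ' k) γ * p.2 γ))) with hPP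
    have hmem : ∀ q ∈ PP, ∃ p ∈ P', q = (p.1, pderivPi i p.2) ∨
        ∃ k : Fin n, q = ((k :: p.1 : List (Fin n)),
          fun γ => pderivPi i (fun γ' : Fin n → ℝ => sph n hn γ' k) γ * p.2 γ) := by
      intro q hq
      rw [hPP, List.mem_flatMap] at hq
      obtain ⟨p, hp, hq⟩ := hq
      rcases List.mem_cons.1 hq with h | h
      · exact ⟨p, hp, Or.inl h⟩
      · obtain ⟨k, _, hk⟩ := List.mem_map.1 h
        exact ⟨p, hp, Or.inr ⟨k, hk.symm⟩⟩
    refine ⟨PP, ?_, ?_, ?_, ?_, ?_⟩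
    · -- lengths
      intro q hq
      obtain ⟨p, hp, hcase⟩ := hmem q hq
      have := h1 p hp
      rcases hcase with rfl | ⟨k, rfl⟩ <;> simp only [List.length_cons] <;> omega
    · -- zero coefficient on the empty multi-index
      intro _ q hq hq1
      obtain ⟨p, hp, hcase⟩ := hmem q hq
      rcases hcase with rfl | ⟨k, rfl⟩
      · simp only at hq1
        by_cases hL' : L' = []
        · have hP'eq := h3 hL'
          rw [hP'eq, List.mem_singleton] at hp
          rw [hp]
          funext γ
          show fderiv ℝ (fun _ => (1:ℝ)) γ (Pi.single i 1) = 0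
          rw [fderiv_const_apply]
          rfl
        · have hz := h2 hL' p hp hq1
          rw [hz]
          funext γ
          show fderiv ℝ (fun _ => (0:ℝ)) γ (Pi.single i 1) = 0
          rw [fderiv_const_apply]
          rfl
      · simp at hq1
    · intro h; exact absurd h (by simp)
    · -- coefficient structure
      intro q hq
      obtain ⟨p, hp, hcase⟩ := hmem q hq
      obtain ⟨b, hb, hpb⟩ := h4 p hp
      rcases hcase with rfl | ⟨k, rfl⟩
      · have hE' : ∀ j : Fin n, (p.1.length - cntL (i :: L') j) =
            (p.1.length - cntL L' j) - (if i.val ≤ j.val then 1 else 0) := by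
          intro j
          rw [cntL_cons]
          omega
        obtain ⟨b', hb', heq⟩ := term1 (fun j => p.1.length - cntL L' j) hb i
          (fun j => p.1.length - cntL (i :: L') j) hE'
        refine ⟨b', hb', ?_⟩
        show pderivPi i p.2 = _
        rw [hpb]
        exact heq
      · have hE' : ∀ j : Fin n, ((k :: p.1 : List (Fin n)).length - cntL (i :: L') j) ≤
            (p.1.length - cntL L' j) + (if j.val < i.val then 1 else 0) := by
          intro j
          rw [cntL_cons]
          simp only [List.length_cons]
          by_cases h : i.val ≤ j.val <;> by_cases h' : j.val < i.val <;>
            simp [h, h'] <;> omega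
        obtain ⟨b', hb', heq⟩ := term2 hn (fun j => p.1.length - cntL L' j) hb i k
          (fun j => (k :: p.1 : List (Fin n)).length - cntL (i :: L') j) hE'
        refine ⟨b', hb', ?_⟩
        show (fun γ => pderivPi i (fun γ' : Fin n → ℝ => sph n hn γ' k) γ * p.2 γ) = _
        rw [← heq]
        funext γ
        rw [hpb]
    · -- the derivative identity
      intro γ hγ
      have hσγ : sph n hn γ ∈ Ball n := sph_mem_Ball hn hγ
      have hBopen : IsOpen (Ball n) := Metric.isOpen_ball
      have hσdiff : DifferentiableAt ℝ (sph n hn) γ :=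
        ((sph_contDiff hn).differentiable (by simp)) γ
      -- differentiability of the coefficients
      have hcoeffTP : ∀ p ∈ P', p.2 ∈ TP n := by
        intro p hp
        obtain ⟨b, hb, hpb⟩ := h4 p hp
        rw [hpb]
        have : (fun γ => SPow (fun j => p.1.length - cntL L' j) γ * b γ) =
            SPow (fun j => p.1.length - cntL L' j) * b := rfl
        rw [this]
        exact mul_mem (SPow_mem _) hb
      -- differentiability of `Dlist p.1 g` on the ball
      have hDdiff : ∀ p ∈ P', DifferentiableAt ℝ (Dlist p.1 g) (sph n hn γ) := by
        intro p hp
        have hlenp : p.1.length + 1 ≤ n := by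
          have := h1 p hp
          simp only [List.length_cons] at hlen
          omega
        have hC : ContDiffOn ℝ ((1:ℕ) : ℕ∞) (Dlist p.1 g) (Ball n) :=
          Dlist_contDiffOn hBopen hg p.1 1 hlenp
        exact (hC.differentiableOn (by simp)).differentiableAt
          (hBopen.mem_nhds hσγ)
      have hterm_diff : ∀ p ∈ P', DifferentiableAt ℝ
          (fun γ' => ((p.2 γ' : ℝ) : ℂ) * Dlist p.1 g (sph n hn γ')) γ := by
        intro p hp
        have hc : DifferentiableAt ℝ (fun γ' => ((p.2 γ' : ℝ) : ℂ)) γ :=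
          Complex.ofRealCLM.differentiableAt.comp γ
            ((TP_differentiable (hcoeffTP p hp)) γ)
        exact hc.mul ((hDdiff p hp).comp γ hσdiff)
      -- Step A: replace the inner function on the open set
      have hA : List.foldr pderivPi (fun γ' => g (sph n hn γ')) (i :: L') γ =
          pderivPi i (fun γ' => (P'.map (fun p =>
            ((p.2 γ' : ℝ) : ℂ) * Dlist p.1 g (sph n hn γ'))).sum) γ := by
        rw [List.foldr_cons]
        exact pderivPi_congr (Usph_open hn) h5 hγ i
      -- Step B: differentiate the sum termwise
      have hB := pderivPi_list_sum P'
        (fun p γ' => ((p.2 γ' : ℝ) : ℂ) * Dlist p.1 g (sph n hn γ')) γ i hterm_diff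
      -- Step C: per-term derivative
      have hC : ∀ p ∈ P', pderivPi i
          (fun γ' => ((p.2 γ' : ℝ) : ℂ) * Dlist p.1 g (sph n hn γ')) γ =
          ((pderivPi i p.2 γ : ℝ) : ℂ) * Dlist p.1 g (sph n hn γ) +
          ((p.2 γ : ℝ) : ℂ) * ∑ k : Fin n,
            ((pderivPi i (fun γ' : Fin n → ℝ => sph n hn γ' k) γ : ℝ) : ℂ) *
              Dlist (k :: p.1) g (sph n hn γ) := by
        intro p hp
        rw [pderivPi_mulC (H := fun γ' => Dlist p.1 g (sph n hn γ'))
          ((TP_differentiable (hcoeffTP p hp)) γ)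
          (by exact (hDdiff p hp).comp γ hσdiff) i]
        congr 1
        congr 1
        rw [chain_rule hn (hDdiff p hp) i]
        rfl
      rw [hA, hB]
      rw [List.map_congr_left hC]
      -- Step D: reorganize the right-hand side
      rw [hPP, list_sum_flatMap]
      refine congrArg List.sum (List.map_congr_left ?_)
      intro p hp
      rw [List.map_cons, List.sum_cons, List.map_map]
      simp only [Function.comp_def]
      congr 1
      rw [← Fin.sum_univ_def (fun k =>
        ((pderivPi i (fun γ' : Fin n → ℝ => sph n hn γ' k) γ * p.2 γ : ℝ) : ℂ) *
          Dlist (k :: p.1) g (sph n hn γ))]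
      rw [Finset.mul_sum]
      refine Finset.sum_congr rfl fun k _ => ?_
      push_cast
      ring

end Main

section End1

theorem DmultiPi_eq_foldr {n : ℕ} (α : Fin n → Bool) (G : (Fin n → ℝ) → ℂ) :
    DmultiPi (natOf α) G =
      List.foldr pderivPi G ((List.finRange n).filter (fun i => α i)) := by
  rw [DmultiPi]
  induction (List.finRange n) with
  | nil => rfl
  | cons a l ih =>
    rw [List.foldr_cons, ih]
    by_cases h : α a
    · rw [List.filter_cons_of_pos (by simp [h]), List.foldr_cons]
      simp [natOf, h]
    · rw [List.filter_cons_of_neg (by simp [h])]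
      simp [natOf, h]

theorem countP_eq_sum {κ : Type} (l : List κ) (q : κ → Bool) :
    l.countP q = (l.map (fun i => if q i then 1 else 0)).sum := by
  induction l with
  | nil => rfl
  | cons a l ih =>
    rw [List.countP_cons, List.map_cons, List.sum_cons, ih]
    by_cases h : q a <;> simp [h] <;> omega

theorem length_filter_finRange {n : ℕ} (α : Fin n → Bool) :
    ((List.finRange n).filter (fun i => α i)).length = ∑ i, natOf α i := by
  rw [← List.countP_eq_length_filter, countP_eq_sum, ← Fin.sum_univ_def]
  exact Finset.sum_congr rfl fun i _ => by by_cases h : α i <;> simp [h, natOf]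

theorem cntL_filter_finRange {n : ℕ} (α : Fin n → Bool) (j : Fin n) :
    cntL ((List.finRange n).filter (fun i => α i)) j =
      ∑ i ∈ Finset.univ.filter (fun i : Fin n => i.val ≤ j.val), natOf α i := by
  rw [cntL, List.countP_filter, countP_eq_sum, ← Fin.sum_univ_def, Finset.sum_filter]
  refine Finset.sum_congr rfl fun i _ => ?_
  by_cases h1 : α i <;> by_cases h2 : i.val ≤ j.val <;> simp [h1, h2, natOf]

theorem listsum_memTP {n : ℕ} {ι : Type} (l : List ι) (F : ι → (Fin n → ℝ) → ℝ)
    (h : ∀ p ∈ l, F p ∈ TP n) : (fun γ => (l.map (fun p => F p γ)).sum) ∈ TP n := by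
  induction l with
  | nil => exact const_memTP 0
  | cons a l ih =>
    have : (fun γ : Fin n → ℝ => ((a :: l).map (fun p => F p γ)).sum) =
        F a + fun γ => (l.map (fun p => F p γ)).sum := by
      funext γ; simp
    rw [this]
    exact add_mem (h a (List.mem_cons_self))
      (ih fun p hp => h p (List.mem_cons_of_mem a hp))

theorem list_sum_filter_of_zero {ι : Type} (l : List ι) (q : ι → Bool) (f : ι → ℂ)
    (h : ∀ p ∈ l, ¬ q p → f p = 0) :
    (l.map f).sum = ((l.filter q).map f).sum := by
  induction l with
  | nil => rfl
  | cons a l ih =>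
    rw [List.map_cons, List.sum_cons, List.filter_cons]
    by_cases hq : q a
    · rw [if_pos hq, List.map_cons, List.sum_cons,
        ih fun p hp => h p (List.mem_cons_of_mem a hp)]
    · rw [if_neg hq, h a (List.mem_cons_self) hq, zero_add,
        ih fun p hp => h p (List.mem_cons_of_mem a hp)]

theorem list_sum_group {ι κ : Type} [Fintype κ] [DecidableEq κ] (l : List ι)
    (key_s16 : ι → κ) (f : ι → ℂ) :
    (l.map f).sum = ∑ b : κ, ((l.filter (fun p => decide (key_s16 p = b))).map f).sum := by
  induction l with
  | nil => simp
  | cons a l ih =>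
    rw [List.map_cons, List.sum_cons, ih]
    have hb : ∀ b : κ, (((a :: l).filter (fun p => decide (key_s16 p = b))).map f).sum =
        (if key_s16 a = b then f a else 0) +
          ((l.filter (fun p => decide (key_s16 p = b))).map f).sum := by
      intro b
      rw [List.filter_cons]
      by_cases h : key_s16 a = b <;> simp [h]
    rw [Finset.sum_congr rfl fun b _ => hb b, Finset.sum_add_distrib]
    congr 1
    rw [Finset.sum_ite_eq Finset.univ (key_s16 a) (fun _ => f a)]
    simp

theorem list_sum_mul_left {ι : Type} (l : List ι) (a : ℂ) (f : ι → ℂ) :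
    (l.map (fun p => a * f p)).sum = a * (l.map f).sum := by
  induction l with
  | nil => simp
  | cons b l ih => simp [ih, mul_add]

theorem list_sum_ofReal {ι : Type} (l : List ι) (F : ι → ℝ) :
    (l.map (fun p => ((F p : ℝ) : ℂ))).sum = (((l.map F).sum : ℝ) : ℂ) := by
  induction l with
  | nil => simp
  | cons b l ih => simp [ih]

end End1


/-- **Lemma (spherical vs Cartesian derivatives).** For `α ∈ {0,1}^n`, `|α| ≥ 1`,
`D^α_γ (g∘σ) = Σ_{1 ≤ |β| ≤ |α|} c_β d_β (D^β_x g)∘σ` with bounded smooth functions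
`d_β` on `ℚ_n`. -/
theorem statement16 (n : ℕ) (hn : 2 ≤ n) (g : E n → ℂ)
    (hg : ContDiffOn ℝ (n : ℕ∞) g (Ball n))
    (α : Fin n → Bool) (hα : 1 ≤ ∑ i, natOf α i) :
    ∃ d : (Fin n → ℕ) → (Fin n → ℝ) → ℝ,
      (∀ β : Fin n → ℕ, 1 ≤ ∑ i, β i → (∑ i, β i) ≤ ∑ i, natOf α i →
        ContDiffOn ℝ ⊤ (d β) (QQn n hn) ∧ ∃ M : ℝ, ∀ γ ∈ QQn n hn, |d β γ| ≤ M) ∧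
      ∀ γ ∈ QQn n hn,
        DmultiPi (natOf α) (fun γ' => g (sph n hn γ')) γ =
          ∑ β : Fin n → Fin (n + 1),
            if 1 ≤ ∑ i, (β i).val ∧ (∑ i, (β i).val) ≤ ∑ i, natOf α i then
              ((cbeta α (fun i => (β i).val) γ * d (fun i => (β i).val) γ : ℝ) : ℂ) *
                Dmulti (fun i => (β i).val) g (sph n hn γ)
            else 0 := by
  classical
  set Lα := (List.finRange n).filter (fun i => α i) with hLα
  have hLlen : Lα.length = ∑ i, natOf α i := length_filter_finRange α
  have hLle : Lα.length ≤ n := by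
    rw [hLlen]
    calc ∑ i, natOf α i ≤ ∑ _i : Fin n, 1 :=
          Finset.sum_le_sum (fun i _ => by by_cases h : α i <;> simp [natOf, h])
      _ = n := by simp
  have hLne : Lα ≠ [] := by
    intro h
    rw [← hLlen, h] at hα
    simp at hα
  obtain ⟨P, hP1, hP2, hP3, hP4, hP5⟩ := key_s16 n hn g hg Lα hLle
  set P₁ := P.filter (fun p => !p.1.isEmpty) with hP₁def
  have hP₁sub : ∀ p ∈ P₁, p ∈ P := fun p hp => List.mem_of_mem_filter hp
  have hP₁ne : ∀ p ∈ P₁, p.1 ≠ [] := by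
    intro p hp
    have := List.of_mem_filter hp
    simpa using this
  have hsel : ∀ p ∈ P₁, ∃ b, b ∈ TP n ∧
      p.2 = fun γ => SPow (fun j => p.1.length - cntL Lα j) γ * b γ := by
    intro p hp
    obtain ⟨b, hb1, hb2⟩ := hP4 p (hP₁sub p hp)
    exact ⟨b, hb1, hb2⟩
  set btot : (List (Fin n) × ((Fin n → ℝ) → ℝ)) → ((Fin n → ℝ) → ℝ) := fun p =>
    if h : ∃ b, b ∈ TP n ∧
        p.2 = fun γ => SPow (fun j => p.1.length - cntL Lα j) γ * b γ
    then Classical.choose h else 0 with hbtot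
  have hbtotTP : ∀ p, btot p ∈ TP n := by
    intro p
    rw [hbtot]
    dsimp only
    split_ifs with h
    · exact (Classical.choose_spec h).1
    · exact zero_mem _
  have hbtot_eq : ∀ p ∈ P₁,
      p.2 = fun γ => SPow (fun j => p.1.length - cntL Lα j) γ * btot p γ := by
    intro p hp
    have hd : btot p = Classical.choose (hsel p hp) := by
      rw [hbtot]
      dsimp only
      rw [dif_pos (hsel p hp)]
    rw [hd]
    exact (Classical.choose_spec (hsel p hp)).2
  have hcnt_le : ∀ p ∈ P₁, ∀ i : Fin n, p.1.count i ≤ n := fun p hp i =>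
    le_trans List.count_le_length (le_trans (hP1 p (hP₁sub p hp)) hLle)
  refine ⟨fun β γ =>
    ((P₁.filter (fun p => decide ((fun i => p.1.count i) = β))).map
      (fun p => btot p γ)).sum, ?_, ?_⟩
  · intro β _ _
    have hmem := listsum_memTP (P₁.filter (fun p => decide ((fun i => p.1.count i) = β)))
      btot (fun p _ => hbtotTP p)
    exact ⟨(TP_smooth hmem).contDiffOn, TP_bdd hn hmem⟩
  · intro γ hγ
    have hγU : γ ∈ Usph n hn := QQn_subset_Usph hn hγ
    have hBopen : IsOpen (Ball n) := Metric.isOpen_ball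
    have hσγ : sph n hn γ ∈ Ball n := sph_mem_Ball hn hγU
    rw [DmultiPi_eq_foldr, ← hLα, hP5 γ hγU]
    have hdrop := list_sum_filter_of_zero P (fun p => !p.1.isEmpty)
      (fun p => ((p.2 γ : ℝ) : ℂ) * Dlist p.1 g (sph n hn γ))
      (by
        intro p hp hq
        have hp1 : p.1 = [] := by simpa using hq
        show ((p.2 γ : ℝ) : ℂ) * Dlist p.1 g (sph n hn γ) = 0
        rw [hP2 hLne p hp hp1]
        simp)
    rw [hdrop, ← hP₁def]
    have hterm : ∀ p ∈ P₁, ((p.2 γ : ℝ) : ℂ) * Dlist p.1 g (sph n hn γ) =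
        ((cbeta α (fun i => p.1.count i) γ : ℝ) : ℂ) * ((btot p γ : ℝ) : ℂ) *
          Dmulti (fun i => p.1.count i) g (sph n hn γ) := by
      intro p hp
      have hcb : cbeta α (fun i => p.1.count i) γ =
          SPow (fun j => p.1.length - cntL Lα j) γ := by
        rw [cbeta, SPow]
        refine Finset.prod_congr rfl fun j hj => ?_
        congr 1
        rw [sum_count_eq_length, cntL_filter_finRange]
      have hDl : Dlist p.1 g (sph n hn γ) =
          Dmulti (fun i => p.1.count i) g (sph n hn γ) := by
        rw [Dmulti_eq_Dlist]
        exact Dlist_perm hBopen hg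
          (List.perm_iff_count.2 fun a => (count_ofβ (fun i => p.1.count i) a).symm)
          (le_trans (hP1 p (hP₁sub p hp)) hLle) (sph n hn γ) hσγ
      rw [hbtot_eq p hp]
      beta_reduce
      rw [← hcb, hDl]
      push_cast
      ring
    rw [List.map_congr_left hterm]
    rw [list_sum_group P₁ (fun p => fun i : Fin n =>
      (⟨min (p.1.count i) n, Nat.lt_succ_of_le (min_le_right _ _)⟩ : Fin (n + 1)))
      (fun p => ((cbeta α (fun i => p.1.count i) γ : ℝ) : ℂ) * ((btot p γ : ℝ) : ℂ) *
        Dmulti (fun i => p.1.count i) g (sph n hn γ))]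
    refine Finset.sum_congr rfl fun β _ => ?_
    set l := P₁.filter (fun p => decide ((fun p => fun i : Fin n =>
      (⟨min (p.1.count i) n, Nat.lt_succ_of_le (min_le_right _ _)⟩ : Fin (n + 1))) p = β))
      with hldef
    have hlsub : ∀ p ∈ l, p ∈ P₁ := fun p hp => List.mem_of_mem_filter hp
    have hl_counts : ∀ p ∈ l, (fun i => p.1.count i) = (fun i => (β i).val) := by
      intro p hp
      have hkey := List.of_mem_filter hp
      rw [decide_eq_true_eq] at hkey
      funext i
      have h1 := congrFun hkey i
      have h2 : p.1.count i ≤ n := hcnt_le p (hlsub p hp) i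
      have h3 := congrArg Fin.val h1
      simpa [min_eq_left h2] using h3
    have hdl : P₁.filter (fun p => decide ((fun i => p.1.count i) =
        (fun i => (β i).val))) = l := by
      rw [hldef]
      refine List.filter_congr ?_
      intro p hp
      rw [decide_eq_decide]
      constructor
      · intro h
        funext i
        apply Fin.ext
        have := congrFun h i
        simp [this, min_eq_left (Nat.lt_succ_iff.1 (β i).isLt)]
      · intro h
        funext i
        have h1 := congrFun h i
        have h2 : p.1.count i ≤ n := hcnt_le p hp i
        have h3 := congrArg Fin.val h1
        simpa [min_eq_left h2] using h3
    by_cases hl : l = []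
    · rw [hl]
      have hdz : ((P₁.filter (fun p => decide ((fun i => p.1.count i) =
          (fun i => (β i).val)))).map (fun p => btot p γ)).sum = 0 := by
        rw [hdl, hl]
        rfl
      by_cases hcond : 1 ≤ ∑ i, (β i).val ∧ (∑ i, (β i).val) ≤ ∑ i, natOf α i
      · rw [if_pos hcond]
        beta_reduce
        rw [hdz]
        simp
      · rw [if_neg hcond]
        rfl
    · obtain ⟨p₀, hp₀⟩ := List.exists_mem_of_ne_nil l hl
      have hsum0 : ∑ i, (β i).val = p₀.1.length := by
        have := congrArg (fun f => ∑ i, f i) (hl_counts p₀ hp₀)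
        simp only at this
        rw [← this, sum_count_eq_length]
      have hcond : 1 ≤ ∑ i, (β i).val ∧ (∑ i, (β i).val) ≤ ∑ i, natOf α i := by
        constructor
        · rw [hsum0]
          have := hP₁ne p₀ (hlsub p₀ hp₀)
          cases hh : p₀.1 with
          | nil => exact absurd hh this
          | cons a t => simp [hh]
        · rw [hsum0, ← hLlen]
          exact hP1 p₀ (hP₁sub p₀ (hlsub p₀ hp₀))
      rw [if_pos hcond]
      have hterm2 : ∀ p ∈ l,
          ((cbeta α (fun i => p.1.count i) γ : ℝ) : ℂ) * ((btot p γ : ℝ) : ℂ) *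
            Dmulti (fun i => p.1.count i) g (sph n hn γ) =
          (((cbeta α (fun i => (β i).val) γ : ℝ) : ℂ) *
            Dmulti (fun i => (β i).val) g (sph n hn γ)) * ((btot p γ : ℝ) : ℂ) := by
        intro p hp
        rw [hl_counts p hp]
        ring
      rw [List.map_congr_left hterm2, list_sum_mul_left, list_sum_ofReal]
      beta_reduce
      rw [hdl]
      push_cast
      ring
end HLTV
end
end

section
/- Let α ∈ {0,1}^n with |α| ≥ 1 and let β ∈ ℕ_0^n be a multi-index with 1 ≤ |β| ≤ |α|. Then there is a constant C, independent of j, such that for every j ∈ ℕ, if the dyadic box B_j has generation m, then ∫_{Q_α(x^{(j)}, y^{(j)})} c_β(γ) dγ_α ≤ C·2^{−m|β|}, where c_β(γ) = Π_{j=2}^{n−1} (sin θ_j)^{max{0, |β| − (α_1 + ⋯ + α_j)}} for γ = (r,θ_2,…,θ_n) ∈ ℚ_n, and the integration over Q_α(x^{(j)},y^{(j)}) is performed only in the variables γ_k with α_k = 1. -/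
noncomputable section

open MeasureTheory Real Set Filter Topology Pointwise
open scoped RealInnerProductSpace ENNReal

namespace HLTV

section Aux

lemma telescopeHLTV (r : ℕ → ℝ) (c a : ℕ → ℕ) (hr : ∀ i, 1 ≤ r i)
    (hc : ∀ i, 1 ≤ i → c i ≤ c (i+1) + a i) :
    ∀ N, ∏ i ∈ Finset.Icc 1 N, ((r i / r (i-1)) ^ (c i) * ((r i)⁻¹) ^ (a i))
      ≤ ((r 0)⁻¹) ^ (c 1) * (r N) ^ (c (N+1)) := by
  have hpos : ∀ i, (0:ℝ) < r i := fun i => lt_of_lt_of_le one_pos (hr i)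
  intro N
  induction N with
  | zero =>
      rw [show Finset.Icc 1 0 = (∅ : Finset ℕ) by rfl]
      rw [Finset.prod_empty, ← mul_pow, inv_mul_cancel₀ (hpos 0).ne', one_pow]
  | succ N ih =>
      rw [Finset.prod_Icc_succ_top (by omega : 1 ≤ N + 1)]
      have hf : (0:ℝ) ≤ (r (N+1) / r N) ^ (c (N+1)) * ((r (N+1))⁻¹) ^ (a (N+1)) := by
        have h1 := (hpos (N+1)).le
        have h2 := hpos N
        positivity
      calc (∏ i ∈ Finset.Icc 1 N, ((r i / r (i-1)) ^ (c i) * ((r i)⁻¹) ^ (a i))) *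
              ((r (N+1) / r (N+1-1)) ^ (c (N+1)) * ((r (N+1))⁻¹) ^ (a (N+1)))
          ≤ (((r 0)⁻¹) ^ (c 1) * (r N) ^ (c (N+1))) *
              ((r (N+1) / r N) ^ (c (N+1)) * ((r (N+1))⁻¹) ^ (a (N+1))) := by
            apply mul_le_mul_of_nonneg_right ih
            simpa using hf
        _ = ((r 0)⁻¹) ^ (c 1) * ((r (N+1)) ^ (c (N+1)) * ((r (N+1))⁻¹) ^ (a (N+1))) := by
            rw [div_pow, mul_assoc]
            congr 1
            rw [← mul_assoc, ← mul_div_assoc,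
              mul_div_cancel_left₀ _ (pow_ne_zero _ (hpos N).ne')]
        _ ≤ ((r 0)⁻¹) ^ (c 1) * (r (N+1)) ^ (c (N+1+1)) := by
            apply mul_le_mul_of_nonneg_left _ (by
              have := hpos 0; positivity)
            rw [inv_pow, mul_inv_le_iff₀ (by have := hpos (N+1); positivity), ← pow_add]
            exact pow_le_pow_right₀ (hr _) (hc (N+1) (by omega))

lemma prod_fin_filterHLTV {M : Type*} [CommMonoid M] (n t : ℕ) (ht : t < n) (g : Fin n → M) :
    ∏ j ∈ Finset.univ.filter (fun j : Fin n => 1 ≤ j.val ∧ j.val ≤ t), g j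
      = ∏ j ∈ Finset.Icc 1 t, (if h : j < n then g ⟨j, h⟩ else 1) := by
  rw [Finset.prod_filter]
  have h1 : (∏ j : Fin n, if 1 ≤ j.val ∧ j.val ≤ t then g j else 1)
      = ∏ j ∈ Finset.range n,
          (fun j => if 1 ≤ j ∧ j ≤ t then (if h : j < n then g ⟨j, h⟩ else 1) else 1) j := by
    rw [← Fin.prod_univ_eq_prod_range]
    refine Finset.prod_congr rfl fun j _ => ?_
    simp only [j.isLt, dif_pos, Fin.eta]
  rw [h1, ← Finset.prod_filter]
  apply Finset.prod_congr _ fun j _ => rfl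
  ext z
  simp only [Finset.mem_filter, Finset.mem_range, Finset.mem_Icc]
  omega

lemma sum_fin_filter_leHLTV (n t : ℕ) (ht : t < n) (g : Fin n → ℕ) :
    ∑ i ∈ Finset.univ.filter (fun i : Fin n => i.val ≤ t), g i
      = ∑ i ∈ Finset.range (t+1), (if h : i < n then g ⟨i, h⟩ else 0) := by
  rw [Finset.sum_filter]
  have h1 : (∑ i : Fin n, if i.val ≤ t then g i else 0)
      = ∑ i ∈ Finset.range n,
          (fun i => if i ≤ t then (if h : i < n then g ⟨i, h⟩ else 0) else 0) i := by
    rw [← Fin.sum_univ_eq_sum_range]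
    refine Finset.sum_congr rfl fun i _ => ?_
    simp only [i.isLt, dif_pos, Fin.eta]
  rw [h1, ← Finset.sum_filter]
  apply Finset.sum_congr _ fun i _ => rfl
  ext z
  simp only [Finset.mem_filter, Finset.mem_range]
  omega

lemma prod_fin_to_rangeHLTV {M : Type*} [CommMonoid M] (n : ℕ) (g : Fin n → M) :
    ∏ j : Fin n, g j = ∏ j ∈ Finset.range n, (if h : j < n then g ⟨j, h⟩ else 1) := by
  rw [← Fin.prod_univ_eq_prod_range]
  exact Finset.prod_congr rfl fun j _ => by simp [j.isLt]

lemma sum_fin_to_rangeHLTV (n : ℕ) (g : Fin n → ℕ) :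
    ∑ j : Fin n, g j = ∑ j ∈ Finset.range n, (if h : j < n then g ⟨j, h⟩ else 0) := by
  rw [← Fin.sum_univ_eq_sum_range]
  exact Finset.sum_congr rfl fun j _ => by simp [j.isLt]

end Aux
/-- **Lemma (integral of `c_β` over faces of dyadic boxes).**
`∫_{Q_α(x^{(j)},y^{(j)})} c_β dγ_α ≲ 2^{-m|β|}`. -/
theorem statement17 (n : ℕ) (hn : 2 ≤ n) (α : Fin n → Bool) (hα : 1 ≤ ∑ i, natOf α i)
    (β : Fin n → ℕ) (hβ1 : 1 ≤ ∑ i, β i) (hβ2 : (∑ i, β i) ≤ ∑ i, natOf α i) :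
    ∃ C : ℝ, ∀ b : BoxIndex n hn,
      ∫ γ, cbeta α β γ ∂(bdryMeasure n α (xcorner b) (ycorner b)) ≤
        C * ((2 : ℝ) ^ (gen b * ∑ i, β i))⁻¹ := by
  classical
  refine ⟨8 ^ ((n+1) * n), ?_⟩
  intro b
  set B := ∑ i, β i with hB
  set m := b.k (i0 n hn) with hm
  set x := xcorner b with hx
  set y := ycorner b with hy
  set μs : Fin n → Measure ℝ := fun i =>
    if α i then (volume : Measure ℝ).restrict (Set.Icc (min (x i) (y i)) (max (x i) (y i)))
    else Measure.dirac (y i) with hμs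
  have hfin : ∀ i, IsFiniteMeasure (μs i) := by
    intro i
    simp only [hμs]
    split
    · constructor
      rw [Measure.restrict_apply_univ, Real.volume_Icc]
      exact ENNReal.ofReal_lt_top
    · infer_instance
  haveI := hfin
  haveI : ∀ i, SigmaFinite (μs i) := fun i => inferInstance
  have hμ : bdryMeasure n α x y = Measure.pi μs := rfl
  set T : Fin n → Set ℝ := fun i => Set.Icc (min (x i) (y i)) (max (x i) (y i)) with hT
  have hae : ∀ᵐ γ ∂(Measure.pi μs), ∀ i, γ i ∈ T i := by
    rw [MeasureTheory.ae_all_iff]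
    intro i
    rw [MeasureTheory.ae_iff]
    have hset : {γ : Fin n → ℝ | ¬ γ i ∈ T i}
        = Set.pi Set.univ (fun j => if j = i then (T i)ᶜ else Set.univ) := by
      ext γ
      simp only [Set.mem_setOf_eq, Set.mem_pi, Set.mem_univ, true_implies]
      constructor
      · intro h j
        by_cases hj : j = i
        · subst hj; simpa using h
        · simp [hj]
      · intro h
        have := h i
        simpa using this
    rw [hset, Measure.pi_pi]
    refine Finset.prod_eq_zero (Finset.mem_univ i) ?_
    simp only [eq_self_iff_true, if_true, hμs]
    split
    · rw [Measure.restrict_apply (measurableSet_Icc.compl)]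
      simp [hT]
    · rw [Measure.dirac_apply' _ (measurableSet_Icc.compl)]
      have : y i ∈ T i := Set.mem_Icc.mpr ⟨min_le_right _ _, le_max_right _ _⟩
      simp only [hT] at this ⊢
      exact Set.indicator_of_notMem (by simpa using this) _
  -- endpoint facts
  set rr : ℕ → ℝ := fun j => if j = 0 then (2:ℝ)^m
    else if h : j < n then ((b.k ⟨j, h⟩ : ℝ) + 1) else 1 with hrrdef
  have hrr1 : ∀ j, (1:ℝ) ≤ rr j := by
    intro j
    simp only [hrrdef]
    split
    · exact one_le_pow₀ one_le_two
    · split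
      · have : (0:ℝ) ≤ (b.k ⟨j, by assumption⟩ : ℝ) := Nat.cast_nonneg _
        linarith
      · exact le_refl 1
  have hrpos : ∀ j, (0:ℝ) < rr j := fun j => lt_of_lt_of_le one_pos (hrr1 j)
  have hrmono : ∀ j, 1 ≤ j → j ≤ n - 1 → rr j ≤ rr (j-1) := by
    intro j h1 h2
    have hjn : j < n := by omega
    by_cases hj1 : j = 1
    · subst hj1
      simp only [hrrdef]
      rw [if_neg one_ne_zero, dif_pos hjn]
      norm_num
      have hle := b.le_top
      have h2m : 1 ≤ 2^m := Nat.one_le_two_pow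
      have hle2 : b.k (i1 n hn) + 1 ≤ 2^m := by
        have hle' := b.le_top
        rw [← hm] at hle'
        omega
      have hle3 : ((b.k (i1 n hn) : ℝ) + 1) ≤ (2:ℝ)^m := by exact_mod_cast hle2
      exact hle3
    · have hj2 : 2 ≤ j := by omega
      simp only [hrrdef]
      rw [if_neg (by omega : ¬ j = 0), dif_pos hjn, if_neg (by omega : ¬ j - 1 = 0),
        dif_pos (by omega : j - 1 < n)]
      have hmono := b.antitone ⟨j-1, by omega⟩ ⟨j, hjn⟩ (by simpa using (by omega : 1 ≤ j - 1))
        (by rw [Fin.mk_le_mk]; omega)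
      have : (b.k ⟨j, hjn⟩ : ℝ) ≤ (b.k ⟨j-1, by omega⟩ : ℝ) := by exact_mod_cast hmono
      linarith
  have hden : ∀ i : Fin n, 1 ≤ i.val → den n hn b.k i = rr (i.val - 1) := by
    intro i h1
    unfold den
    by_cases he : i.val = 1
    · rw [if_pos he, he]
      simp only [hrrdef]
      norm_num [hm]
    · rw [if_neg he]
      simp only [hrrdef]
      rw [if_neg (by omega : ¬ i.val - 1 = 0), dif_pos (by have := i.isLt; omega : i.val - 1 < n)]
  have hrval : ∀ i : Fin n, 1 ≤ i.val → rr i.val = (b.k i : ℝ) + 1 := by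
    intro i h1
    have h0 : ¬ i.val = 0 := by omega
    simp [hrrdef, h0, i.isLt, Fin.eta]
  have hcoeffpos : ∀ i : Fin n, 0 < coeff n i := by
    intro i
    unfold coeff
    split
    · linarith [Real.pi_pos]
    · linarith [Real.pi_pos]
  have hcoeffle : ∀ i : Fin n, coeff n i ≤ 8 := by
    intro i
    unfold coeff
    split
    · linarith [Real.pi_le_four]
    · linarith [Real.pi_le_four]
  have hloHi : ∀ i : Fin n, lo n hn b.k i ≤ hi n hn b.k i := by
    intro i
    unfold lo hi
    by_cases h0 : i.val = 0
    · rw [if_pos h0, if_pos h0]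
      have hp : ((2:ℝ)^(b.k i + 1))⁻¹ ≤ ((2:ℝ)^(b.k i))⁻¹ := by
        apply inv_anti₀ (by positivity)
        apply pow_le_pow_right₀ one_le_two
        omega
      linarith
    · rw [if_neg h0, if_neg h0, hden i (by omega)]
      have h1 := hrpos (i.val - 1)
      have h2 := (hcoeffpos i).le
      have h3 : (b.k i : ℝ) ≤ (b.k i : ℝ) + 1 := by linarith
      gcongr
  have hdiff : ∀ i : Fin n, 1 ≤ i.val →
      hi n hn b.k i - lo n hn b.k i = coeff n i / rr (i.val - 1) := by
    intro i h1
    unfold hi lo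
    rw [if_neg (by omega : ¬ i.val = 0), if_neg (by omega : ¬ i.val = 0), hden i h1]
    have h2 := (hrpos (i.val - 1)).ne'
    field_simp
    ring
  have hhiv : ∀ i : Fin n, 1 ≤ i.val →
      hi n hn b.k i = coeff n i * (rr i.val / rr (i.val - 1)) := by
    intro i h1
    unfold hi
    rw [if_neg (by omega : ¬ i.val = 0), hden i h1, hrval i h1]
    ring
  have hlo0 : ∀ i : Fin n, 0 ≤ lo n hn b.k i := by
    intro i
    unfold lo
    split
    · have h1 : (1:ℝ) ≤ 2 ^ (b.k i) := one_le_pow₀ one_le_two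
      have h2 : ((2:ℝ)^(b.k i))⁻¹ ≤ 1 := by
        rw [inv_le_one_iff₀]
        right; exact h1
      linarith
    · rename_i h0
      rw [hden i (by omega)]
      have h1 := (hcoeffpos i).le
      have h2 := hrpos (i.val - 1)
      positivity
  have hhipos : ∀ i : Fin n, 0 ≤ hi n hn b.k i := fun i => le_trans (hlo0 i) (hloHi i)
  have hhalf : ∀ i : Fin n, 1 ≤ i.val → i.val ≤ n - 2 → hi n hn b.k i ≤ π / 2 := by
    intro i h1 h2
    rw [hhiv i h1]
    have hc : coeff n i = π/2 := by
      unfold coeff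
      rw [if_neg (by omega : ¬ i.val = n - 1)]
    rw [hc]
    have hq : rr i.val / rr (i.val - 1) ≤ 1 :=
      div_le_one_of_le₀ (hrmono i.val h1 (by have := i.isLt; omega)) (hrpos _).le
    have hs : (0:ℝ) ≤ π / 2 := by linarith [Real.pi_pos]
    calc π / 2 * (rr i.val / rr (i.val - 1)) ≤ π / 2 * 1 := by
          exact mul_le_mul_of_nonneg_left hq hs
      _ = π / 2 := mul_one _
  -- sine bounds on the box
  have hsin : ∀ γ : Fin n → ℝ, (∀ i, γ i ∈ T i) → ∀ j : Fin n, 1 ≤ j.val → j.val ≤ n - 2 →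
      0 ≤ Real.sin (γ j) ∧ Real.sin (γ j) ≤ hi n hn b.k j := by
    intro γ hγ j h1 h2
    have hj := hγ j
    have hlh := hloHi j
    have hl0 := hlo0 j
    have hh2 := hhalf j h1 h2
    have hπ : hi n hn b.k j ≤ π := by linarith [Real.pi_pos]
    simp only [hT, hx, hy, xcorner, ycorner] at hj
    by_cases hrefl : b.refl j
    · rw [if_pos hrefl, if_pos hrefl] at hj
      rw [min_eq_right (by linarith), max_eq_left (by linarith)] at hj
      obtain ⟨hj1, hj2⟩ := hj
      have hs : Real.sin (γ j) = Real.sin (π - γ j) := (Real.sin_pi_sub _).symm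
      constructor
      · rw [hs]
        exact Real.sin_nonneg_of_nonneg_of_le_pi (by linarith) (by linarith)
      · rw [hs]
        exact le_trans (Real.sin_le (by linarith)) (by linarith)
    · rw [if_neg hrefl, if_neg hrefl] at hj
      rw [min_eq_left hlh, max_eq_right hlh] at hj
      obtain ⟨hj1, hj2⟩ := hj
      constructor
      · exact Real.sin_nonneg_of_nonneg_of_le_pi (by linarith) (by linarith)
      · exact le_trans (Real.sin_le (by linarith)) (by linarith)
  -- Step 1 : bound the integral by sup times measure
  have step1 : ∫ γ, cbeta α β γ ∂(bdryMeasure n α x y)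
      ≤ ((Measure.pi μs) Set.univ).toReal *
        ∏ j ∈ Finset.univ.filter (fun j : Fin n => 1 ≤ j.val ∧ j.val ≤ n - 2),
          (hi n hn b.k j) ^
            ((∑ i, β i) - ∑ i ∈ Finset.univ.filter (fun i : Fin n => i.val ≤ j.val), natOf α i) := by
    rw [hμ]
    have hnn : 0 ≤ᵐ[Measure.pi μs] fun γ => cbeta α β γ := by
      filter_upwards [hae] with γ hγ
      unfold cbeta
      apply Finset.prod_nonneg
      intro j hj
      rw [Finset.mem_filter] at hj
      exact pow_nonneg ((hsin γ hγ j hj.2.1 hj.2.2).1) _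
    have hle : ∀ᵐ γ ∂(Measure.pi μs), cbeta α β γ ≤
        ∏ j ∈ Finset.univ.filter (fun j : Fin n => 1 ≤ j.val ∧ j.val ≤ n - 2),
          (hi n hn b.k j) ^
            ((∑ i, β i) - ∑ i ∈ Finset.univ.filter (fun i : Fin n => i.val ≤ j.val), natOf α i) := by
      filter_upwards [hae] with γ hγ
      unfold cbeta
      apply Finset.prod_le_prod
      · intro j hj
        rw [Finset.mem_filter] at hj
        exact pow_nonneg ((hsin γ hγ j hj.2.1 hj.2.2).1) _
      · intro j hj
        rw [Finset.mem_filter] at hj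
        exact pow_le_pow_left₀ ((hsin γ hγ j hj.2.1 hj.2.2).1)
          ((hsin γ hγ j hj.2.1 hj.2.2).2) _
    calc ∫ γ, cbeta α β γ ∂(Measure.pi μs)
        ≤ ∫ _γ, (∏ j ∈ Finset.univ.filter (fun j : Fin n => 1 ≤ j.val ∧ j.val ≤ n - 2),
            (hi n hn b.k j) ^
              ((∑ i, β i) - ∑ i ∈ Finset.univ.filter (fun i : Fin n => i.val ≤ j.val),
                natOf α i)) ∂(Measure.pi μs) :=
          MeasureTheory.integral_mono_of_nonneg hnn (MeasureTheory.integrable_const _) hle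
      _ = _ := by rw [MeasureTheory.integral_const, smul_eq_mul, Measure.real]
  -- Step 2 : the measure of the box
  have step2 : ((Measure.pi μs) Set.univ).toReal
      = ∏ i : Fin n, (if α i then hi n hn b.k i - lo n hn b.k i else 1) := by
    rw [MeasureTheory.Measure.pi_univ, ENNReal.toReal_prod]
    refine Finset.prod_congr rfl fun i _ => ?_
    simp only [hμs]
    split
    · rename_i hc
      rw [Measure.restrict_apply_univ, Real.volume_Icc,
        ENNReal.toReal_ofReal (sub_nonneg.mpr (min_le_max))]
      simp only [hx, hy, xcorner, ycorner]
      by_cases hrefl : b.refl i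
      · rw [if_pos hrefl, if_pos hrefl, max_eq_left (by linarith [hloHi i]),
          min_eq_right (by linarith [hloHi i])]
        ring
      · rw [if_neg hrefl, if_neg hrefl, max_eq_right (hloHi i), min_eq_left (hloHi i)]
    · rename_i hc
      simp [hc]
  -- ℕ-indexed combinatorial data
  set aN : ℕ → ℕ := fun j => if h : j < n then natOf α ⟨j, h⟩ else 0 with haNdef
  set SN : ℕ → ℕ := fun j => ∑ i ∈ Finset.range (j+1), aN i with hSNdef
  set eN : ℕ → ℕ := fun j => B - SN j with heNdef
  set cN : ℕ → ℕ := fun j => eN j + aN j with hcNdef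
  have hαn : (∑ i, natOf α i) ≤ n := by
    calc ∑ i, natOf α i ≤ ∑ _i : Fin n, 1 :=
          Finset.sum_le_sum (fun i _ => by unfold natOf; split <;> omega)
      _ = n := by simp
  have hBn : B ≤ n := le_trans hβ2 hαn
  have haN1 : ∀ j, aN j ≤ 1 := by
    intro j
    simp only [haNdef]
    split
    · unfold natOf; split <;> omega
    · omega
  have hSA : SN (n-1) = ∑ i, natOf α i := by
    simp only [hSNdef]
    rw [show n - 1 + 1 = n from by omega, sum_fin_to_rangeHLTV n (natOf α)]
  have heNn : ∀ j, eN j ≤ n := by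
    intro j
    simp only [heNdef]
    omega
  have hcrel : ∀ i, 1 ≤ i → cN i ≤ cN (i+1) + aN i := by
    intro i _
    have hs : SN (i+1) = SN i + aN (i+1) := by
      simp only [hSNdef]
      rw [Finset.sum_range_succ]
    simp only [hcNdef, heNdef]
    omega
  have hcn0 : cN n = 0 := by
    have h1 : aN n = 0 := by simp [haNdef]
    have h2 : SN n = SN (n-1) + aN n := by
      simp only [hSNdef]
      have hxx : n - 1 + 1 = n := by omega
      rw [show n + 1 = n - 1 + 1 + 1 from by omega, Finset.sum_range_succ, hxx]
    simp only [hcNdef, heNdef]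
    omega
  have hc1' : B ≤ aN 0 + cN 1 := by
    have hs1 : SN 1 = aN 0 + aN 1 := by
      simp only [hSNdef]
      rw [Finset.sum_range_succ, Finset.sum_range_one]
    simp only [hcNdef, heNdef]
    omega
  -- the products, re-indexed over ℕ
  set Gl : ℕ → ℝ := fun j => if h : j < n then
      (if α ⟨j, h⟩ then hi n hn b.k ⟨j, h⟩ - lo n hn b.k ⟨j, h⟩ else 1) else 1 with hGldef
  set GM : ℕ → ℝ := fun j => if h : j < n then (hi n hn b.k ⟨j, h⟩) ^ (eN j) else 1 with hGMdef
  set GM' : ℕ → ℝ := fun j => if j ≤ n - 2 then GM j else 1 with hGM'def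
  have hrange : Finset.range n = insert 0 (Finset.Icc 1 (n-1)) := by
    ext z
    simp only [Finset.mem_range, Finset.mem_insert, Finset.mem_Icc]
    omega
  have hL : (∏ i : Fin n, (if α i then hi n hn b.k i - lo n hn b.k i else 1))
      = Gl 0 * ∏ j ∈ Finset.Icc 1 (n-1), Gl j := by
    simp only [hGldef]
    rw [prod_fin_to_rangeHLTV n (fun i => if α i then hi n hn b.k i - lo n hn b.k i else 1),
      hrange, Finset.prod_insert (by simp)]
  have hM : (∏ j ∈ Finset.univ.filter (fun j : Fin n => 1 ≤ j.val ∧ j.val ≤ n - 2),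
        (hi n hn b.k j) ^
          ((∑ i, β i) - ∑ i ∈ Finset.univ.filter (fun i : Fin n => i.val ≤ j.val), natOf α i))
      = ∏ j ∈ Finset.Icc 1 (n-2), GM j := by
    rw [prod_fin_filterHLTV n (n-2) (by omega)
      (fun j => (hi n hn b.k j) ^
        ((∑ i, β i) - ∑ i ∈ Finset.univ.filter (fun i : Fin n => i.val ≤ j.val), natOf α i))]
    refine Finset.prod_congr rfl fun j hj => ?_
    rw [Finset.mem_Icc] at hj
    have hjn : j < n := by omega
    simp only [hGMdef]
    rw [dif_pos hjn, dif_pos hjn]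
    congr 1
    rw [sum_fin_filter_leHLTV n j hjn (natOf α)]
  have hM2 : (∏ j ∈ Finset.Icc 1 (n-2), GM j) = ∏ j ∈ Finset.Icc 1 (n-1), GM' j := by
    have h1 : (∏ j ∈ Finset.Icc 1 (n-2), GM j) = ∏ j ∈ Finset.Icc 1 (n-2), GM' j := by
      refine Finset.prod_congr rfl fun j hj => ?_
      rw [Finset.mem_Icc] at hj
      simp only [hGM'def]
      rw [if_pos hj.2]
    rw [h1]
    refine Finset.prod_subset (Finset.Icc_subset_Icc_right (by omega)) fun z hz hnz => ?_
    rw [Finset.mem_Icc] at hz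
    rw [Finset.mem_Icc] at hnz
    simp only [hGM'def]
    rw [if_neg (by omega)]
  -- per-factor estimates
  have hGl0 : Gl 0 ≤ ((2:ℝ)^m)⁻¹ ^ (aN 0) := by
    simp only [hGldef, haNdef]
    rw [dif_pos (by omega : 0 < n), dif_pos (by omega : 0 < n)]
    by_cases hα' : α ⟨0, by omega⟩
    · rw [if_pos hα']
      unfold natOf
      rw [if_pos hα', pow_one]
      unfold hi lo
      rw [if_pos rfl, if_pos rfl]
      have hk0 : b.k ⟨0, by omega⟩ = m := hm.symm
      rw [hk0]
      have hp2 : (0:ℝ) ≤ ((2:ℝ) ^ (m+1))⁻¹ := by positivity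
      linarith
    · rw [if_neg hα']
      unfold natOf
      rw [if_neg hα', pow_zero]
  have hGM'val : ∀ j, 1 ≤ j → j ≤ n - 1 →
      GM' j = ((π/2) * (rr j / rr (j-1))) ^ (eN j) := by
    intro j hj1 hj2
    have hjn : j < n := by omega
    by_cases hle : j ≤ n - 2
    · simp only [hGM'def, hGMdef]
      rw [if_pos hle, dif_pos hjn]
      have hhi := hhiv ⟨j, hjn⟩ (by simpa using hj1)
      have hco : coeff n ⟨j, hjn⟩ = π/2 := by
        unfold coeff
        rw [if_neg (by simp; omega)]
      rw [hhi, hco]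
    · have hj' : j = n - 1 := by omega
      have he0 : eN j = 0 := by
        simp only [heNdef]
        rw [hj', hSA]
        omega
      simp only [hGM'def]
      rw [if_neg hle, he0, pow_zero]
  have hGlval : ∀ j (hjn : j < n), 1 ≤ j → j ≤ n - 1 →
      Gl j = (coeff n ⟨j, hjn⟩ / rr (j-1)) ^ (aN j) := by
    intro j hjn hj1 hj2
    simp only [hGldef, haNdef]
    rw [dif_pos hjn, dif_pos hjn]
    by_cases hα' : α ⟨j, hjn⟩
    · rw [if_pos hα']
      unfold natOf
      rw [if_pos hα', pow_one]
      have hd := hdiff ⟨j, hjn⟩ (by simpa using hj1)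
      simpa using hd
    · rw [if_neg hα']
      unfold natOf
      rw [if_neg hα', pow_zero]
  -- per-factor bound
  have hfactor : ∀ j ∈ Finset.Icc 1 (n-1),
      Gl j * GM' j ≤ 8^(n+1) * ((rr j / rr (j-1)) ^ (cN j) * ((rr j)⁻¹) ^ (aN j)) := by
    intro j hj
    rw [Finset.mem_Icc] at hj
    have hjn : j < n := by omega
    rw [hGlval j hjn hj.1 hj.2, hGM'val j hj.1 hj.2]
    have hrj := hrpos j
    have hrj1 := hrpos (j-1)
    have hq0 : (0:ℝ) ≤ rr j / rr (j-1) := div_nonneg hrj.le hrj1.le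
    have hco0 : (0:ℝ) ≤ coeff n ⟨j, hjn⟩ := (hcoeffpos _).le
    have hcoeq : coeff n ⟨j, hjn⟩ / rr (j-1)
        = coeff n ⟨j, hjn⟩ * ((rr j / rr (j-1)) * (rr j)⁻¹) := by
      field_simp
    rw [hcoeq]
    have h5 : (0:ℝ) ≤ (rr j / rr (j-1)) ^ (cN j) * ((rr j)⁻¹) ^ (aN j) :=
      mul_nonneg (pow_nonneg hq0 _) (pow_nonneg (inv_nonneg.mpr hrj.le) _)
    calc (coeff n ⟨j, hjn⟩ * ((rr j / rr (j-1)) * (rr j)⁻¹)) ^ (aN j) *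
           ((π/2) * (rr j / rr (j-1))) ^ (eN j)
        = ((π/2) ^ (eN j) * coeff n ⟨j, hjn⟩ ^ (aN j)) *
            ((rr j / rr (j-1)) ^ (cN j) * ((rr j)⁻¹) ^ (aN j)) := by
          simp only [hcNdef]
          rw [mul_pow, mul_pow, mul_pow, pow_add]
          ring
      _ ≤ ((8:ℝ)^n * 8^1) *
            ((rr j / rr (j-1)) ^ (cN j) * ((rr j)⁻¹) ^ (aN j)) := by
          apply mul_le_mul_of_nonneg_right _ h5
          have h1 : (π/2:ℝ) ^ (eN j) ≤ 8 ^ (eN j) :=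
            pow_le_pow_left₀ (by positivity) (by linarith [Real.pi_le_four]) _
          have h2 : (8:ℝ) ^ (eN j) ≤ 8 ^ n := pow_le_pow_right₀ (by norm_num) (heNn j)
          have h3 : coeff n ⟨j, hjn⟩ ^ (aN j) ≤ 8 ^ 1 := by
            rcases Nat.le_one_iff_eq_zero_or_eq_one.mp (haN1 j) with h | h
            · rw [h, pow_zero]; norm_num
            · rw [h, pow_one, pow_one]; exact hcoeffle _
          have h4 : (0:ℝ) ≤ coeff n ⟨j, hjn⟩ ^ (aN j) := pow_nonneg hco0 _
          exact mul_le_mul (le_trans h1 h2) h3 h4 (by positivity)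
      _ = 8^(n+1) * ((rr j / rr (j-1)) ^ (cN j) * ((rr j)⁻¹) ^ (aN j)) := by
          rw [← pow_add]
  have hprod0 : ∀ j ∈ Finset.Icc 1 (n-1), (0:ℝ) ≤ Gl j * GM' j := by
    intro j hj
    rw [Finset.mem_Icc] at hj
    have hjn : j < n := by omega
    rw [hGlval j hjn hj.1 hj.2, hGM'val j hj.1 hj.2]
    refine mul_nonneg (pow_nonneg (div_nonneg (hcoeffpos _).le (hrpos _).le) _)
      (pow_nonneg (mul_nonneg (by positivity) (div_nonneg (hrpos j).le (hrpos _).le)) _)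
  -- telescoping
  have htel := telescopeHLTV rr cN aN hrr1 hcrel (n-1)
  have hrr0 : rr 0 = (2:ℝ)^m := by simp [hrrdef]
  have hcnn : cN (n-1+1) = 0 := by
    rw [show n-1+1 = n from by omega]
    exact hcn0
  rw [hrr0, hcnn, pow_zero, mul_one] at htel
  -- assembly
  have hgen : gen b = m := hm.symm
  calc ∫ γ, cbeta α β γ ∂(bdryMeasure n α x y)
      ≤ ((Measure.pi μs) Set.univ).toReal *
        ∏ j ∈ Finset.univ.filter (fun j : Fin n => 1 ≤ j.val ∧ j.val ≤ n - 2),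
          (hi n hn b.k j) ^
            ((∑ i, β i) - ∑ i ∈ Finset.univ.filter (fun i : Fin n => i.val ≤ j.val),
              natOf α i) := step1
    _ = (Gl 0 * ∏ j ∈ Finset.Icc 1 (n-1), Gl j) * ∏ j ∈ Finset.Icc 1 (n-1), GM' j := by
        rw [step2, hL, hM, hM2]
    _ = Gl 0 * ∏ j ∈ Finset.Icc 1 (n-1), (Gl j * GM' j) := by
        rw [mul_assoc, ← Finset.prod_mul_distrib]
    _ ≤ ((2:ℝ)^m)⁻¹ ^ (aN 0) * ∏ j ∈ Finset.Icc 1 (n-1),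
          ((8:ℝ)^(n+1) * ((rr j / rr (j-1)) ^ (cN j) * ((rr j)⁻¹) ^ (aN j))) :=
        mul_le_mul hGl0 (Finset.prod_le_prod hprod0 hfactor)
          (Finset.prod_nonneg hprod0) (by positivity)
    _ = ((2:ℝ)^m)⁻¹ ^ (aN 0) * (((8:ℝ)^(n+1)) ^ (n-1) *
          ∏ j ∈ Finset.Icc 1 (n-1), ((rr j / rr (j-1)) ^ (cN j) * ((rr j)⁻¹) ^ (aN j))) := by
        rw [Finset.prod_mul_distrib, Finset.prod_const, Nat.card_Icc,
          show n - 1 + 1 - 1 = n - 1 from by omega]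
    _ ≤ ((2:ℝ)^m)⁻¹ ^ (aN 0) * (((8:ℝ)^(n+1)) ^ (n-1) * (((2:ℝ)^m)⁻¹ ^ (cN 1))) := by
        apply mul_le_mul_of_nonneg_left _ (by positivity)
        exact mul_le_mul_of_nonneg_left htel (by positivity)
    _ ≤ 8 ^ ((n+1)*n) * (((2:ℝ)^m)⁻¹) ^ B := by
        have h8 : ((8:ℝ)^(n+1))^(n-1) ≤ 8^((n+1)*n) := by
          rw [← pow_mul]
          exact pow_le_pow_right₀ (by norm_num) (Nat.mul_le_mul_left _ (by omega))
        have hi1 : ((2:ℝ)^m)⁻¹ ≤ 1 := by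
          rw [inv_le_one_iff₀]
          right
          exact one_le_pow₀ one_le_two
        have hcomb : ((2:ℝ)^m)⁻¹ ^ (aN 0) * ((2:ℝ)^m)⁻¹ ^ (cN 1) ≤ ((2:ℝ)^m)⁻¹ ^ B := by
          rw [← pow_add]
          exact pow_le_pow_of_le_one (by positivity) hi1 hc1'
        calc ((2:ℝ)^m)⁻¹ ^ (aN 0) * (((8:ℝ)^(n+1))^(n-1) * ((2:ℝ)^m)⁻¹ ^ (cN 1))
            = (((2:ℝ)^m)⁻¹ ^ (aN 0) * ((2:ℝ)^m)⁻¹ ^ (cN 1)) * ((8:ℝ)^(n+1))^(n-1) := by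
              ring
          _ ≤ ((2:ℝ)^m)⁻¹ ^ B * 8^((n+1)*n) :=
              mul_le_mul hcomb h8 (by positivity) (by positivity)
          _ = 8 ^ ((n+1)*n) * (((2:ℝ)^m)⁻¹) ^ B := by ring
    _ = 8 ^ ((n+1)*n) * ((2:ℝ) ^ (gen b * B))⁻¹ := by
        rw [hgen]
        congr 1
        rw [inv_pow, ← pow_mul]
end HLTV
end
end

section
/- Let λ > −1, n ≥ 2, and let f : [1,∞) → ℝ be a continuous function with inf_{x ≥ 1} f(x) x^λ > 0. Define g : [1,∞) → [0,∞) by g(x) = ∫_1^x f(y) y^{λ−1} dy and ψ : (0,1) → ℂ by ψ(r) = r^{−n+1} (1−r²)^{−λ} f((1−r)^{−1}) exp(iπ g((1−r)^{−1})). Then sup_{m ∈ ℕ_0} sup_{ρ ∈ [1−2^{−m}, 1−2^{−m−1}]} 2^{m(1+λ)} |∫_{1−2^{−m}}^{ρ} r^{n−1} ψ(r) (1−r²)^λ dr| < ∞. -/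
noncomputable section

open MeasureTheory Real Set Filter Topology Pointwise
open scoped RealInnerProductSpace ENNReal

namespace HLTV

/-! ### Auxiliary definitions and lemmas for statement19 -/

def Fx (f : ℝ → ℝ) : ℝ → ℝ := fun x => f (max x 1)

def gg (f : ℝ → ℝ) (l : ℝ) : ℝ → ℝ := fun x => ∫ t in (1:ℝ)..x, Fx f t * t ^ (l-1)

def Ee (f : ℝ → ℝ) (l : ℝ) : ℝ → ℂ :=
  fun r => Complex.exp ((Real.pi : ℂ) * ((gg f l ((1-r)⁻¹) : ℝ) : ℂ) * Complex.I)

def Hh (f : ℝ → ℝ) (l : ℝ) : ℝ → ℂ :=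
  fun r => ((Real.pi : ℂ) * Complex.I)⁻¹ * ((((1-r) ^ (1+l) : ℝ)) : ℂ) * Ee f l r

variable (f : ℝ → ℝ) (l : ℝ)

theorem contF (hf : ContinuousOn f (Ici 1)) : Continuous (Fx f) :=
  hf.comp_continuous (continuous_id.max continuous_const) (fun x => mem_Ici.mpr (le_max_right _ _))

theorem contInteg (hf : ContinuousOn f (Ici 1)) :
    ∀ x : ℝ, x ≠ 0 → ContinuousAt (fun t : ℝ => Fx f t * t ^ (l-1)) x := by
  intro x hx
  exact ((contF f hf).continuousAt).mul (Real.continuousAt_rpow_const x (l-1) (Or.inl hx))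

theorem hgderiv (hf : ContinuousOn f (Ici 1)) {x : ℝ} (hx : 0 < x) :
    HasDerivAt (gg f l) (Fx f x * x ^ (l-1)) x := by
  apply intervalIntegral.integral_hasDerivAt_right
  · apply ContinuousOn.intervalIntegrable
    intro t ht
    have ht0 : t ≠ 0 := by
      rcases le_total 1 x with h | h
      · rw [uIcc_of_le h] at ht; exact (lt_of_lt_of_le one_pos ht.1).ne'
      · rw [uIcc_of_ge h] at ht; exact (lt_of_lt_of_le hx ht.1).ne'
    exact (contInteg f l hf t ht0).continuousWithinAt
  · exact (ContinuousAt.stronglyMeasurableAtFilter isOpen_ne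
      (fun y hy => contInteg f l hf y hy) x hx.ne')
  · exact contInteg f l hf x hx.ne'

theorem hguderiv (hf : ContinuousOn f (Ici 1)) {r : ℝ} (hr : r < 1) :
    HasDerivAt (fun r => gg f l ((1-r)⁻¹))
      (Fx f ((1-r)⁻¹) * ((1-r) ^ (1+l))⁻¹) r := by
  have hs : (0:ℝ) < 1 - r := by linarith
  have hu : HasDerivAt (fun r : ℝ => (1-r)⁻¹) (((1-r)^2)⁻¹) r := by
    have h1 : HasDerivAt (fun r : ℝ => 1 - r) (-1) r := by
      simpa using (hasDerivAt_id r).const_sub 1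
    have := h1.inv hs.ne'
    refine this.congr_deriv ?_
    simp
  have hx : (0:ℝ) < (1-r)⁻¹ := by positivity
  have h2 := (hgderiv f l hf hx).comp r hu
  refine h2.congr_deriv ?_
  have key : ((1-r)⁻¹) ^ (l-1) * (((1-r))^2)⁻¹ = ((1-r) ^ (1+l))⁻¹ := by
    rw [Real.inv_rpow hs.le, ← Real.rpow_natCast (1-r) 2, ← mul_inv, ← Real.rpow_add hs]
    norm_num
    rw [show l - 1 + 2 = 1 + l by ring]

  rw [← key]; ring

theorem hEderiv (hf : ContinuousOn f (Ici 1)) {r : ℝ} (hr : r < 1) :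
    HasDerivAt (Ee f l)
      (Ee f l r * ((Real.pi : ℂ) * ((Fx f ((1-r)⁻¹) * ((1-r) ^ (1+l))⁻¹ : ℝ) : ℂ) * Complex.I)) r := by
  have h1 := ((hguderiv f l hf hr).ofReal_comp.const_mul (Real.pi : ℂ)).mul_const Complex.I
  exact h1.cexp

theorem hHderiv (hl : -1 < l) (hf : ContinuousOn f (Ici 1)) {r : ℝ} (hr : r < 1) :
    HasDerivAt (Hh f l)
      (((Fx f ((1-r)⁻¹) : ℝ) : ℂ) * Ee f l r
        - ((1+l : ℝ) : ℂ) * ((Real.pi : ℂ) * Complex.I)⁻¹ * (((1-r) ^ l : ℝ) : ℂ) * Ee f l r) r := by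
  have hs : (0:ℝ) < 1 - r := by linarith
  have hP : HasDerivAt (fun r : ℝ => ((1-r) ^ (1+l) : ℝ)) (-((1+l) * (1-r) ^ l)) r := by
    have h1 : HasDerivAt (fun r : ℝ => 1 - r) (-1) r := by
      simpa using (hasDerivAt_id r).const_sub 1
    have h2 := (Real.hasDerivAt_rpow_const (p := 1+l) (x := 1-r) (Or.inl hs.ne')).comp r h1
    refine h2.congr_deriv ?_
    rw [show 1 + l - 1 = l by ring]
    ring
  have hPc : HasDerivAt (fun r : ℝ => (((1-r) ^ (1+l) : ℝ) : ℂ)) ((-((1+l) * (1-r) ^ l) : ℝ) : ℂ) r :=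
    hP.ofReal_comp
  have h3 := (hPc.mul (hEderiv f l hf hr)).const_mul (((Real.pi : ℂ) * Complex.I)⁻¹)
  have heq : (fun r : ℝ => ((Real.pi : ℂ) * Complex.I)⁻¹ * ((((1-r) ^ (1+l) : ℝ)) : ℂ) * Ee f l r)
      = Hh f l := rfl
  replace h3 := h3.congr_of_eventuallyEq (f₁ := Hh f l)
    (Filter.Eventually.of_forall fun y => by simp only [Hh, Pi.mul_apply]; ring)
  refine h3.congr_deriv ?_
  have hpi : (Real.pi : ℂ) ≠ 0 := Complex.ofReal_ne_zero.mpr Real.pi_ne_zero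
  have hq : ((((1-r) ^ (1+l) : ℝ)) : ℂ) ≠ 0 :=
    Complex.ofReal_ne_zero.mpr (Real.rpow_pos_of_pos hs (1+l)).ne'
  have hql : ((1-r) ^ (1+l) : ℝ) * ((1-r) ^ l : ℝ)⁻¹ = 1 - r := by
    rw [← Real.rpow_neg hs.le, ← Real.rpow_add hs]
    norm_num
  push_cast
  field_simp
  ring_nf

-- norm of Ee
theorem normEe (r : ℝ) : ‖Ee f l r‖ = 1 := by
  have : (Real.pi : ℂ) * ((gg f l ((1-r)⁻¹) : ℝ) : ℂ) * Complex.I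
      = (((Real.pi * gg f l ((1-r)⁻¹) : ℝ) : ℂ)) * Complex.I := by push_cast; ring
  rw [Ee, this, Complex.norm_exp_ofReal_mul_I]

theorem contEe (hf : ContinuousOn f (Ici 1)) {r : ℝ} (hr : r < 1) :
    ContinuousAt (Ee f l) r := (hEderiv f l hf hr).continuousAt

theorem contw (hf : ContinuousOn f (Ici 1)) {r : ℝ} (hr : r < 1) :
    ContinuousAt (fun r : ℝ => (((1-r) ^ l : ℝ) : ℂ) * Ee f l r) r := by
  have hs : (0:ℝ) < 1 - r := by linarith
  have h1 : ContinuousAt (fun r : ℝ => ((1-r) ^ l : ℝ)) r :=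
    ContinuousAt.rpow_const ((continuous_const.sub continuous_id).continuousAt) (Or.inl hs.ne')
  exact (Complex.continuous_ofReal.continuousAt.comp h1).mul (contEe f l hf hr)

theorem contphi (hf : ContinuousOn f (Ici 1)) {r : ℝ} (hr : r < 1) :
    ContinuousAt (fun r : ℝ => ((Fx f ((1-r)⁻¹) : ℝ) : ℂ) * Ee f l r) r := by
  have hs : (0:ℝ) < 1 - r := by linarith
  have h1 : ContinuousAt (fun r : ℝ => Fx f ((1-r)⁻¹)) r :=
    (contF f hf).continuousAt.comp
      (((continuous_const.sub continuous_id).continuousAt).inv₀ hs.ne')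
  exact (Complex.continuous_ofReal.continuousAt.comp h1).mul (contEe f l hf hr)

theorem hAderiv (hl : -1 < l) {r : ℝ} (hr : r < 1) :
    HasDerivAt (fun r : ℝ => -((1-r) ^ (1+l)) / (1+l)) ((1-r) ^ l) r := by
  have hs : (0:ℝ) < 1 - r := by linarith
  have h1 : HasDerivAt (fun r : ℝ => 1 - r) (-1) r := by
    simpa using (hasDerivAt_id r).const_sub 1
  have h2 := (Real.hasDerivAt_rpow_const (p := 1+l) (x := 1-r) (Or.inl hs.ne')).comp r h1
  have h3 := (h2.neg).div_const (1+l)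
  refine h3.congr_deriv ?_
  rw [show 1 + l - 1 = l by ring]
  have : 1 + l ≠ 0 := by linarith
  field_simp


/-- **Example (radial oscillating symbols).** For any continuous `f : [1,∞) → ℝ` with
`inf f(x)x^λ > 0`, the radial symbol
`ψ(r) = r^{-n+1}(1-r²)^{-λ} f((1-r)^{-1}) exp(iπ g((1-r)^{-1}))`, where
`g(x) = ∫_1^x f(y) y^{λ-1} dy`, satisfies the weak Carleson condition (9.new). -/
theorem statement19 (n : ℕ) (hn : 2 ≤ n) (l : ℝ) (hl : -1 < l)
    (f : ℝ → ℝ) (hf : ContinuousOn f (Ici 1))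
    (hpos : ∃ ε : ℝ, 0 < ε ∧ ∀ x : ℝ, 1 ≤ x → ε ≤ f x * x ^ l) :
    ∃ M : ℝ,
      ∀ m : ℕ, ∀ ρ ∈ Icc (1 - ((2 : ℝ) ^ m)⁻¹) (1 - ((2 : ℝ) ^ (m + 1))⁻¹),
        (2 : ℝ) ^ ((m : ℝ) * (1 + l)) *
          ‖∫ r in (1 - ((2 : ℝ) ^ m)⁻¹)..ρ,
              ((r ^ (n - 1) : ℝ) : ℂ) *
                (((r ^ (n - 1) : ℝ))⁻¹ * ((((1 - r ^ 2 : ℝ) ^ l) : ℝ)⁻¹ *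
                    (f ((1 - r)⁻¹) : ℝ)) *
                  Complex.exp ((Real.pi : ℂ) *
                    ((∫ t in (1 : ℝ)..((1 - r)⁻¹), f t * t ^ (l - 1) : ℝ) : ℂ) *
                    Complex.I)) *
                (((1 - r ^ 2 : ℝ) ^ l : ℝ) : ℂ)‖ ≤ M := by
  refine ⟨3, fun m ρ hρ => ?_⟩
  obtain ⟨haρ, hρb⟩ := hρ
  set a : ℝ := 1 - ((2:ℝ)^m)⁻¹ with ha
  have h2m : (0:ℝ) < 2^m := by positivity
  have h2m1 : (0:ℝ) < 2^(m+1) := by positivity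
  have hinv1 : ((2:ℝ)^m)⁻¹ ≤ 1 := by
    rw [inv_le_one_iff₀]; right; exact one_le_pow₀ (by norm_num)
  have ha0 : 0 ≤ a := by rw [ha]; linarith
  have hb1 : (1 : ℝ) - ((2:ℝ)^(m+1))⁻¹ < 1 := by
    have : (0:ℝ) < ((2:ℝ)^(m+1))⁻¹ := by positivity
    linarith
  have hρ1 : ρ < 1 := lt_of_le_of_lt hρb hb1
  have hl0 : (0:ℝ) < 1 + l := by linarith
  have huIcc : uIcc a ρ = Icc a ρ := uIcc_of_le haρ
  have hρlt : ∀ r ∈ uIcc a ρ, r < 1 := by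
    rw [huIcc]; intro r hr; exact lt_of_le_of_lt hr.2 hρ1
  set φ : ℝ → ℂ := fun r => ((Fx f ((1-r)⁻¹) : ℝ) : ℂ) * Ee f l r with hφ
  set w : ℝ → ℂ := fun r => (((1-r) ^ l : ℝ) : ℂ) * Ee f l r with hw
  set c : ℂ := ((1+l : ℝ) : ℂ) * ((Real.pi : ℂ) * Complex.I)⁻¹ with hc
  set B : ℝ := (((2:ℝ)^m)⁻¹) ^ (1+l) with hB
  have hB0 : 0 ≤ B := Real.rpow_nonneg (by positivity) _
  -- Step 1 : the integrand is a.e. equal to φ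
  have hIπ : (∫ r in a..ρ,
      ((r ^ (n - 1) : ℝ) : ℂ) *
        (((r ^ (n - 1) : ℝ))⁻¹ * ((((1 - r ^ 2 : ℝ) ^ l) : ℝ)⁻¹ * (f ((1 - r)⁻¹) : ℝ)) *
          Complex.exp ((Real.pi : ℂ) *
            ((∫ t in (1 : ℝ)..((1 - r)⁻¹), f t * t ^ (l - 1) : ℝ) : ℂ) * Complex.I)) *
        (((1 - r ^ 2 : ℝ) ^ l : ℝ) : ℂ)) = ∫ r in a..ρ, φ r := by
    apply intervalIntegral.integral_congr_ae
    filter_upwards with r hr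
    rw [uIoc_of_le haρ] at hr
    obtain ⟨hr1, hr2⟩ := hr
    have hr0 : 0 < r := lt_of_le_of_lt ha0 hr1
    have hrl1 : r < 1 := lt_of_le_of_lt hr2 hρ1
    have hs : (0:ℝ) < 1 - r := by linarith
    have hsq : (0:ℝ) < 1 - r^2 := by nlinarith
    have hu1 : (1:ℝ) ≤ (1-r)⁻¹ := by
      rw [le_inv_comm₀ one_pos hs]; linarith
    have hFe : Fx f ((1-r)⁻¹) = f ((1-r)⁻¹) := by
      simp only [Fx]; rw [max_eq_left hu1]
    have hgEq : (∫ t in (1:ℝ)..(1-r)⁻¹, f t * t ^ (l-1)) = gg f l ((1-r)⁻¹) := by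
      rw [gg]
      apply intervalIntegral.integral_congr
      intro t ht
      rw [uIcc_of_le hu1] at ht
      simp only [Fx]; rw [max_eq_left ht.1]
    have hxc : ((r ^ (n-1) : ℝ) : ℂ) ≠ 0 :=
      Complex.ofReal_ne_zero.mpr (pow_ne_zero _ hr0.ne')
    have hyc : (((1 - r^2 : ℝ) ^ l : ℝ) : ℂ) ≠ 0 :=
      Complex.ofReal_ne_zero.mpr (Real.rpow_pos_of_pos hsq l).ne'
    rw [hφ]
    show _ = (((Fx f ((1-r)⁻¹) : ℝ) : ℂ) * Ee f l r)
    have hxc2 : ((r:ℂ)) ^ (n-1) ≠ 0 := pow_ne_zero _ (by exact_mod_cast hr0.ne')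
    rw [Ee, hFe, ← hgEq]
    push_cast
    field_simp [hxc2]
  -- Step 2 : FTC
  have hint_φ : IntervalIntegrable φ volume a ρ := by
    apply ContinuousOn.intervalIntegrable
    intro r hr
    exact (contphi f l hf (hρlt r hr)).continuousWithinAt
  have hint_w : IntervalIntegrable w volume a ρ := by
    apply ContinuousOn.intervalIntegrable
    intro r hr
    exact (contw f l hf (hρlt r hr)).continuousWithinAt
  have hint_D : IntervalIntegrable (fun r => φ r - c * w r) volume a ρ :=
    hint_φ.sub (hint_w.const_mul c)
  have hFTC : ∫ r in a..ρ, (φ r - c * w r) = Hh f l ρ - Hh f l a := by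
    apply intervalIntegral.integral_eq_sub_of_hasDerivAt _ hint_D
    intro r hr
    have h := hHderiv f l hl hf (hρlt r hr)
    refine h.congr_deriv ?_
    rw [hφ, hw, hc]; ring
  have hsplit : ∫ r in a..ρ, φ r = (Hh f l ρ - Hh f l a) + c * ∫ r in a..ρ, w r := by
    have h1 : φ = fun r => (φ r - c * w r) + c * w r := by funext r; ring
    calc ∫ r in a..ρ, φ r = ∫ r in a..ρ, ((φ r - c * w r) + c * w r) := by rw [← h1]
      _ = (∫ r in a..ρ, (φ r - c * w r)) + ∫ r in a..ρ, c * w r :=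
          intervalIntegral.integral_add hint_D (hint_w.const_mul c)
      _ = (Hh f l ρ - Hh f l a) + c * ∫ r in a..ρ, w r := by
          rw [hFTC, intervalIntegral.integral_const_mul]
  -- Step 3 : bounds
  have hπ : (0:ℝ) < Real.pi := Real.pi_pos
  have hnormH : ∀ r, a ≤ r → r ≤ ρ → ‖Hh f l r‖ ≤ Real.pi⁻¹ * B := by
    intro r h1 h2
    have hr1' : r < 1 := lt_of_le_of_lt h2 hρ1
    have hs0 : (0:ℝ) ≤ 1 - r := by linarith
    have hsm : 1 - r ≤ ((2:ℝ)^m)⁻¹ := by rw [ha] at h1; linarith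
    rw [Hh]
    simp only [norm_mul, norm_inv, normEe, mul_one, Complex.norm_real, Complex.norm_I,
      Real.norm_eq_abs, _root_.abs_of_nonneg hπ.le,
      _root_.abs_of_nonneg (Real.rpow_nonneg hs0 _)]
    gcongr
    exact Real.rpow_le_rpow hs0 hsm hl0.le
  have hnormc : ‖c‖ = (1+l) * Real.pi⁻¹ := by
    rw [hc]
    simp only [norm_mul, norm_inv, Complex.norm_real, Complex.norm_I, mul_one,
      Real.norm_eq_abs, _root_.abs_of_nonneg hπ.le, _root_.abs_of_nonneg hl0.le]
  have hint_v : IntervalIntegrable (fun r : ℝ => (1-r) ^ l) volume a ρ := by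
    apply ContinuousOn.intervalIntegrable
    intro r hr
    have hs : (0:ℝ) < 1 - r := by have := hρlt r hr; linarith
    exact (ContinuousAt.rpow_const ((continuous_const.sub continuous_id).continuousAt)
      (Or.inl hs.ne')).continuousWithinAt
  have hIv : (∫ r in a..ρ, ((1-r) ^ l : ℝ)) ≤ B / (1+l) := by
    have hv := intervalIntegral.integral_eq_sub_of_hasDerivAt
      (f := fun r : ℝ => -((1-r) ^ (1+l)) / (1+l)) (f' := fun r : ℝ => (1-r) ^ l)
      (fun r hr => hAderiv l hl (hρlt r hr)) hint_v
    rw [hv]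
    have h1 : (0:ℝ) ≤ (1-ρ) ^ (1+l) := Real.rpow_nonneg (by linarith) _
    have h2 : (1 - a) ^ (1+l) = B := by rw [ha, hB]; norm_num
    have h3 : -((1-ρ) ^ (1+l)) / (1+l) - -((1-a) ^ (1+l)) / (1+l)
        = ((1-a) ^ (1+l) - (1-ρ) ^ (1+l)) / (1+l) := by ring
    rw [h3, h2]
    gcongr
    linarith
  have hnormIw : ‖∫ r in a..ρ, w r‖ ≤ B / (1+l) := by
    calc ‖∫ r in a..ρ, w r‖ ≤ ∫ r in a..ρ, ‖w r‖ :=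
          intervalIntegral.norm_integral_le_integral_norm haρ
      _ = ∫ r in a..ρ, ((1-r) ^ l : ℝ) := by
          apply intervalIntegral.integral_congr
          intro r hr
          have hs0 : (0:ℝ) ≤ 1 - r := by have := hρlt r hr; linarith
          rw [hw]
          simp only [norm_mul, normEe, mul_one, Complex.norm_real, Real.norm_eq_abs,
            _root_.abs_of_nonneg (Real.rpow_nonneg hs0 _)]
      _ ≤ B / (1+l) := hIv
  have hBB : (2:ℝ) ^ ((m:ℝ) * (1+l)) * B = 1 := by
    rw [hB, ← Real.rpow_natCast 2 m, ← Real.rpow_neg (by norm_num : (0:ℝ) ≤ 2),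
      ← Real.rpow_mul (by norm_num : (0:ℝ) ≤ 2), ← Real.rpow_add (by norm_num : (0:ℝ) < 2),
      show (m:ℝ) * (1+l) + -(m:ℝ) * (1+l) = 0 by ring, Real.rpow_zero]
  have hnorm_total : ‖∫ r in a..ρ, φ r‖ ≤ 3 * Real.pi⁻¹ * B := by
    rw [hsplit]
    have h1 := hnormH ρ haρ le_rfl
    have h2 := hnormH a le_rfl haρ
    have h3 : ‖c * ∫ r in a..ρ, w r‖ ≤ Real.pi⁻¹ * B := by
      rw [norm_mul, hnormc]
      calc (1+l) * Real.pi⁻¹ * ‖∫ r in a..ρ, w r‖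
          ≤ (1+l) * Real.pi⁻¹ * (B / (1+l)) :=
            mul_le_mul_of_nonneg_left hnormIw (by positivity)
        _ = Real.pi⁻¹ * B := by field_simp
    calc ‖Hh f l ρ - Hh f l a + c * ∫ r in a..ρ, w r‖
        ≤ ‖Hh f l ρ - Hh f l a‖ + ‖c * ∫ r in a..ρ, w r‖ := norm_add_le _ _
      _ ≤ (‖Hh f l ρ‖ + ‖Hh f l a‖) + ‖c * ∫ r in a..ρ, w r‖ := by
          gcongr; exact norm_sub_le _ _
      _ ≤ 3 * Real.pi⁻¹ * B := by linarith
  rw [hIπ]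
  have h2pos : (0:ℝ) < (2:ℝ) ^ ((m:ℝ)*(1+l)) := Real.rpow_pos_of_pos two_pos _
  have hπ1 : Real.pi⁻¹ ≤ 1 := by
    rw [inv_le_one_iff₀]; right; linarith [Real.pi_gt_three]
  calc (2:ℝ)^((m:ℝ)*(1+l)) * ‖∫ r in a..ρ, φ r‖
      ≤ (2:ℝ)^((m:ℝ)*(1+l)) * (3 * Real.pi⁻¹ * B) :=
        mul_le_mul_of_nonneg_left hnorm_total h2pos.le
    _ = 3 * Real.pi⁻¹ * ((2:ℝ)^((m:ℝ)*(1+l)) * B) := by ring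
    _ = 3 * Real.pi⁻¹ := by rw [hBB, mul_one]
    _ ≤ 3 := by nlinarith [hπ1]


end HLTV
end
end
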